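/- arXiv:2411.03317 — 9 statements merged into one kernel-verified Lean document; each statement's English description precedes it below -/
import Mathlib

section
/- Assume s^{g(s)} + λ ≠ 0 for every s ∈ ℂ ∖ {0, −c}. Then the integrals of ũ(s)·e^{s t} over the two circular arcs of radius R in the left half-plane vanish as R → ∞: lim_{R→∞} ∫_{π/2}^{π} ũ(R e^{iθ}) e^{R e^{iθ} t} · i R e^{iθ} dθ = 0 and lim_{R→∞} ∫_{−π}^{−π/2} ũ(R e^{iθ}) e^{R e^{iθ} t} · i R e^{iθ} dθ = 0 (the integrand being defined for almost every θ; R ranges over positive reals with R ≠ c). -/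
open MeasureTheory Filter Set

/-- `g(s) = s·A(s) = (α₁ s + α₂ c)/(s + c)`, where `A` is the Laplace transform of the
exponential transition function `α(t) = α₂ + (α₁ - α₂)e^{-c t}`. -/
noncomputable def gfun (α₁ α₂ c : ℝ) (s : ℂ) : ℂ := ((α₁ : ℂ) * s + (α₂ : ℂ) * c) / (s + c)

/-- The Laplace-domain solution `ũ(s) = s^{g(s)-1}/(s^{g(s)} + λ)` (principal powers) of the
Scarpi relaxation equation with exponential transition function and `u₀ = 1`. -/
noncomputable def utilde (α₁ α₂ c lam : ℝ) (s : ℂ) : ℂ :=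
  s ^ (gfun α₁ α₂ c s - 1) / (s ^ gfun α₁ α₂ c s + (lam : ℂ))

/-- `h(ρ) = (α₁ ρ - α₂ c)/(c - ρ)`; note `g(-ρ) = -h(ρ)`. -/
noncomputable def hfun (α₁ α₂ c : ℝ) (ρ : ℝ) : ℝ := (α₁ * ρ - α₂ * c) / (c - ρ)

lemma exp_int_tendsto (t : ℝ) (ht : 0 < t) {a b : ℝ} (hab : a < b)
    (hcos : ∀ θ ∈ Ioo a b, Real.cos θ < 0) :
    Tendsto (fun R : ℝ => ∫ θ in a..b, Real.exp (R * (t * Real.cos θ))) atTop (nhds 0) := by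
  have h0 : (0 : ℝ) = ∫ θ in Ioo a b, (0 : ℝ) := by simp
  simp only [intervalIntegral.integral_of_le hab.le, MeasureTheory.integral_Ioc_eq_integral_Ioo]
  rw [h0]
  apply tendsto_integral_filter_of_dominated_convergence (fun _ => (1 : ℝ))
  · filter_upwards with R
    exact (Real.continuous_exp.comp
      (continuous_const.mul (continuous_const.mul Real.continuous_cos))).aestronglyMeasurable
  · filter_upwards [eventually_ge_atTop (0 : ℝ)] with R hR
    filter_upwards [ae_restrict_mem measurableSet_Ioo] with θ hθ
    have h1 : t * Real.cos θ < 0 := mul_neg_of_pos_of_neg ht (hcos θ hθ)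
    have h2 : R * (t * Real.cos θ) ≤ 0 := mul_nonpos_of_nonneg_of_nonpos hR h1.le
    rw [Real.norm_eq_abs, abs_of_pos (Real.exp_pos _)]
    exact Real.exp_le_one_iff.2 h2
  · exact MeasureTheory.integrableOn_const measure_Ioo_lt_top.ne enorm_ne_top
  · filter_upwards [ae_restrict_mem measurableSet_Ioo] with θ hθ
    have h1 : t * Real.cos θ < 0 := mul_neg_of_pos_of_neg ht (hcos θ hθ)
    exact Real.tendsto_exp_atBot.comp (tendsto_id.atTop_mul_const_of_neg h1)

lemma lower_bound (α₁ α₂ c lam : ℝ) (h0 : 0 < α₁) (h12 : α₁ < α₂)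
    (hc : 0 < c) (hlam : 0 < lam) :
    ∀ᶠ R : ℝ in atTop, ∀ θ : ℝ,
      2 * lam ≤ ‖((R : ℂ) * Complex.exp ((θ : ℂ) * Complex.I)) ^
        gfun α₁ α₂ c ((R : ℂ) * Complex.exp ((θ : ℂ) * Complex.I))‖ := by
  have hδ : Tendsto (fun R : ℝ => (α₂ - α₁) * c / (R - c)) atTop (nhds 0) :=
    tendsto_const_nhds.div_atTop (tendsto_atTop_add_const_right _ _ tendsto_id)
  have h1 : ∀ᶠ R : ℝ in atTop, (α₂ - α₁) * c / (R - c) ≤ α₁ / 2 :=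
    hδ.eventually (eventually_le_nhds (half_pos h0))
  have h2 : ∀ᶠ R : ℝ in atTop,
      2 * lam ≤ R ^ (α₁ / 2) * Real.exp (-(Real.pi * (α₁ / 2))) :=
    ((tendsto_rpow_atTop (half_pos h0)).atTop_mul_const (Real.exp_pos _)).eventually_ge_atTop _
  filter_upwards [h1, h2, eventually_ge_atTop (1 : ℝ), eventually_ge_atTop (2 * c + 1)]
    with R hR1 hR2 hR3 hR4 θ
  have hRpos : (0 : ℝ) < R := by linarith
  set s : ℂ := (R : ℂ) * Complex.exp ((θ : ℂ) * Complex.I) with hs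
  have habs : ‖s‖ = R := by
    rw [hs, norm_mul, Complex.norm_real, Real.norm_eq_abs, abs_of_pos hRpos, Complex.norm_exp]
    simp
  have hs0 : s ≠ 0 := by
    intro h; rw [h, norm_zero] at habs; linarith
  have hsc : s + (c : ℂ) ≠ 0 := by
    intro h
    have : s = -(c : ℂ) := by linear_combination h
    rw [this, norm_neg, Complex.norm_real, Real.norm_eq_abs, abs_of_pos hc] at habs
    linarith
  have hg : gfun α₁ α₂ c s - (α₁ : ℂ) = ((α₂ : ℂ) - α₁) * c / (s + c) := by
    rw [gfun]; field_simp; ring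
  have habs2 : R - c ≤ ‖s + c‖ := by
    have := norm_add_le (s + c) (-(c : ℂ))
    simp only [add_neg_cancel_right, norm_neg, Complex.norm_real, Real.norm_eq_abs,
      abs_of_pos hc] at this
    linarith [habs ▸ this]
  have hgabs : ‖gfun α₁ α₂ c s - (α₁ : ℂ)‖ ≤ (α₂ - α₁) * c / (R - c) := by
    rw [hg, norm_div, norm_mul]
    have e1 : ‖(α₂ : ℂ) - α₁‖ = α₂ - α₁ := by
      rw [← Complex.ofReal_sub, Complex.norm_real, Real.norm_eq_abs, abs_of_pos (by linarith)]
    have e2 : ‖(c : ℂ)‖ = c := by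
      rw [Complex.norm_real, Real.norm_eq_abs, abs_of_pos hc]
    rw [e1, e2]
    apply div_le_div_of_nonneg_left (mul_nonneg (by linarith) hc.le) (by linarith) habs2
  have hgsmall : ‖gfun α₁ α₂ c s - (α₁ : ℂ)‖ ≤ α₁ / 2 := hgabs.trans hR1
  have hre : α₁ / 2 ≤ (gfun α₁ α₂ c s).re := by
    have := (Complex.abs_re_le_norm (gfun α₁ α₂ c s - (α₁ : ℂ))).trans hgsmall
    rw [Complex.sub_re, Complex.ofReal_re] at this
    have := abs_le.1 this
    linarith [this.1]
  have him : |(gfun α₁ α₂ c s).im| ≤ α₁ / 2 := by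
    have := (Complex.abs_im_le_norm (gfun α₁ α₂ c s - (α₁ : ℂ))).trans hgsmall
    rwa [Complex.sub_im, Complex.ofReal_im, sub_zero] at this
  rw [Complex.norm_cpow_of_ne_zero hs0, habs]
  have hargim : Complex.arg s * (gfun α₁ α₂ c s).im ≤ Real.pi * (α₁ / 2) := by
    calc Complex.arg s * (gfun α₁ α₂ c s).im
        ≤ |Complex.arg s * (gfun α₁ α₂ c s).im| := le_abs_self _
      _ = |Complex.arg s| * |(gfun α₁ α₂ c s).im| := abs_mul _ _
      _ ≤ Real.pi * (α₁ / 2) :=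
          mul_le_mul (Complex.abs_arg_le_pi s) him (abs_nonneg _) Real.pi_pos.le
  calc 2 * lam ≤ R ^ (α₁ / 2) * Real.exp (-(Real.pi * (α₁ / 2))) := hR2
    _ = R ^ (α₁ / 2) / Real.exp (Real.pi * (α₁ / 2)) := by
        rw [Real.exp_neg, ← div_eq_mul_inv]
    _ ≤ R ^ (gfun α₁ α₂ c s).re / Real.exp (Complex.arg s * (gfun α₁ α₂ c s).im) := by
        apply div_le_div₀ (Real.rpow_nonneg hRpos.le _)
          (Real.rpow_le_rpow_of_exponent_le hR3 hre) (Real.exp_pos _)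
          (Real.exp_le_exp.2 hargim)

lemma arc_aux (α₁ α₂ c lam t : ℝ) (h0 : 0 < α₁) (h12 : α₁ < α₂)
    (hc : 0 < c) (hlam : 0 < lam) (ht : 0 < t)
    {a b : ℝ} (hab : a < b) (hcos : ∀ θ ∈ Ioo a b, Real.cos θ < 0) :
    Tendsto (fun R : ℝ => ∫ θ in a..b,
        utilde α₁ α₂ c lam ((R : ℂ) * Complex.exp ((θ : ℂ) * Complex.I)) *
          Complex.exp ((R : ℂ) * Complex.exp ((θ : ℂ) * Complex.I) * (t : ℂ)) *
          (Complex.I * (R : ℂ) * Complex.exp ((θ : ℂ) * Complex.I)))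
      atTop (nhds 0) := by
  have hlim : Tendsto (fun R : ℝ => |∫ θ in a..b, 2 * Real.exp (R * (t * Real.cos θ))|)
      atTop (nhds 0) := by
    have : Tendsto (fun R : ℝ => 2 * ∫ θ in a..b, Real.exp (R * (t * Real.cos θ)))
        atTop (nhds 0) := by
      simpa using (exp_int_tendsto t ht hab hcos).const_mul 2
    have := this.abs
    simp only [abs_zero] at this
    convert this using 2 with R
    rw [intervalIntegral.integral_const_mul]
  apply squeeze_zero_norm' _ hlim
  filter_upwards [lower_bound α₁ α₂ c lam h0 h12 hc hlam, eventually_gt_atTop (0 : ℝ)]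
    with R hR hRpos
  apply intervalIntegral.norm_integral_le_abs_of_norm_le
  · apply ae_of_all
    intro θ
    set s : ℂ := (R : ℂ) * Complex.exp ((θ : ℂ) * Complex.I) with hs
    have habs : ‖s‖ = R := by
      rw [hs, norm_mul, Complex.norm_real, Real.norm_eq_abs, abs_of_pos hRpos, Complex.norm_exp]
      simp
    have hs0 : s ≠ 0 := by
      intro h; rw [h, norm_zero] at habs; linarith
    have hpow : (2 : ℝ) * lam ≤ ‖s ^ gfun α₁ α₂ c s‖ := hR θ
    have hpowpos : (0 : ℝ) < ‖s ^ gfun α₁ α₂ c s‖ := lt_of_lt_of_le (by linarith) hpow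
    have hden : ‖s ^ gfun α₁ α₂ c s‖ / 2 ≤ ‖s ^ gfun α₁ α₂ c s + (lam : ℂ)‖ := by
      have h1 : ‖s ^ gfun α₁ α₂ c s‖ ≤ ‖s ^ gfun α₁ α₂ c s + (lam : ℂ)‖ + lam := by
        calc ‖s ^ gfun α₁ α₂ c s‖ = ‖s ^ gfun α₁ α₂ c s + (lam : ℂ) + (-(lam : ℂ))‖ := by
              ring_nf
          _ ≤ ‖s ^ gfun α₁ α₂ c s + (lam : ℂ)‖ + ‖(-(lam : ℂ))‖ := norm_add_le _ _
          _ = ‖s ^ gfun α₁ α₂ c s + (lam : ℂ)‖ + lam := by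
              rw [norm_neg, Complex.norm_real, Real.norm_eq_abs, abs_of_pos hlam]
      linarith
    have hut : ‖utilde α₁ α₂ c lam s‖ ≤ 2 / R := by
      rw [utilde, norm_div]
      have hnum : ‖s ^ (gfun α₁ α₂ c s - 1)‖ = ‖s ^ gfun α₁ α₂ c s‖ / R := by
        rw [Complex.cpow_sub _ _ hs0, Complex.cpow_one, norm_div,
          habs]
      rw [hnum]
      calc ‖s ^ gfun α₁ α₂ c s‖ / R / ‖s ^ gfun α₁ α₂ c s + (lam : ℂ)‖
          ≤ ‖s ^ gfun α₁ α₂ c s‖ / R / (‖s ^ gfun α₁ α₂ c s‖ / 2) := by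
            apply div_le_div_of_nonneg_left (by positivity) (by positivity) hden
        _ = 2 / R := by
            have hA : ‖s ^ gfun α₁ α₂ c s‖ ≠ 0 := hpowpos.ne'
            rw [div_div_div_eq, mul_comm R ‖s ^ gfun α₁ α₂ c s‖,
              mul_div_mul_left _ _ hA]
    have hexp : ‖Complex.exp (s * (t : ℂ))‖ = Real.exp (R * (t * Real.cos θ)) := by
      rw [Complex.norm_exp]
      congr 1
      rw [hs]
      simp [Complex.mul_re, Complex.exp_ofReal_mul_I_re, Complex.exp_ofReal_mul_I_im]
      ring
    have hlast : ‖Complex.I * (R : ℂ) * Complex.exp ((θ : ℂ) * Complex.I)‖ = R := by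
      rw [norm_mul, norm_mul, Complex.norm_I, one_mul, Complex.norm_real,
        Real.norm_eq_abs, abs_of_pos hRpos, Complex.norm_exp]
      simp
    calc ‖utilde α₁ α₂ c lam s * Complex.exp (s * (t : ℂ)) *
            (Complex.I * (R : ℂ) * Complex.exp ((θ : ℂ) * Complex.I))‖
        = ‖utilde α₁ α₂ c lam s‖ * ‖Complex.exp (s * (t : ℂ))‖ *
            ‖Complex.I * (R : ℂ) * Complex.exp ((θ : ℂ) * Complex.I)‖ := by
          rw [norm_mul, norm_mul]
      _ ≤ (2 / R) * Real.exp (R * (t * Real.cos θ)) * R := by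
          rw [hexp, hlast]
          apply mul_le_mul_of_nonneg_right _ hRpos.le
          exact mul_le_mul_of_nonneg_right hut (Real.exp_pos _).le
      _ = 2 * Real.exp (R * (t * Real.cos θ)) := by field_simp
  · exact (Continuous.intervalIntegrable (by continuity) a b)

/-- The integrals of `ũ(s)·e^{s t}` over the two circular arcs of radius `R` in the left
half-plane vanish as `R → ∞`. -/
theorem arc_integrals_vanish
    (α₁ α₂ c lam t : ℝ) (h0 : 0 < α₁) (h12 : α₁ < α₂) (h21 : α₂ < 1)
    (hc : 0 < c) (hlam : 0 < lam) (ht : 0 < t)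
    (hnz : ∀ s : ℂ, s ≠ 0 → s ≠ -(c : ℂ) → s ^ gfun α₁ α₂ c s + (lam : ℂ) ≠ 0) :
    Tendsto (fun R : ℝ => ∫ θ in (Real.pi / 2)..Real.pi,
        utilde α₁ α₂ c lam ((R : ℂ) * Complex.exp ((θ : ℂ) * Complex.I)) *
          Complex.exp ((R : ℂ) * Complex.exp ((θ : ℂ) * Complex.I) * (t : ℂ)) *
          (Complex.I * (R : ℂ) * Complex.exp ((θ : ℂ) * Complex.I)))
      atTop (nhds 0) ∧
    Tendsto (fun R : ℝ => ∫ θ in (-Real.pi)..(-(Real.pi / 2)),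
        utilde α₁ α₂ c lam ((R : ℂ) * Complex.exp ((θ : ℂ) * Complex.I)) *
          Complex.exp ((R : ℂ) * Complex.exp ((θ : ℂ) * Complex.I) * (t : ℂ)) *
          (Complex.I * (R : ℂ) * Complex.exp ((θ : ℂ) * Complex.I)))
      atTop (nhds 0) := by
  constructor
  · apply arc_aux α₁ α₂ c lam t h0 h12 hc hlam ht
    · linarith [Real.pi_pos]
    · intro θ hθ
      exact Real.cos_neg_of_pi_div_two_lt_of_lt hθ.1 (by linarith [hθ.2, Real.pi_pos])
  · apply arc_aux α₁ α₂ c lam t h0 h12 hc hlam ht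
    · linarith [Real.pi_pos]
    · intro θ hθ
      rw [← Real.cos_neg]
      exact Real.cos_neg_of_pi_div_two_lt_of_lt (by linarith [hθ.2]) (by linarith [hθ.1, Real.pi_pos])
end

section
/- Fix s₀ > 0 and assume s^{g(s)} + λ ≠ 0 for every s ∈ ℂ ∖ {0, −c}. Then the integrals of ũ(s)·e^{s t} over the horizontal segments at height ±R joining the Bromwich line to the imaginary axis vanish as R → ∞: lim_{R→∞} ∫₀^{s₀} ũ(x + iR) e^{(x + iR) t} dx = 0 and lim_{R→∞} ∫₀^{s₀} ũ(x − iR) e^{(x − iR) t} dx = 0. -/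
open MeasureTheory Filter Set

lemma utilde_bound (α₁ α₂ c lam : ℝ) (h0 : 0 < α₁) (h12 : α₁ < α₂) (h21 : α₂ < 1)
    (hc : 0 < c) (hlam : 0 < lam) {s : ℂ} {R : ℝ}
    (hsre : 0 < s.re) (hsim : |s.im| = R)
    (hR1 : 1 ≤ R) (hR2 : Real.pi * ((α₂ - α₁) * c) ≤ R)
    (hR3 : 2 * Real.exp 1 * lam ≤ R ^ α₁) :
    ‖utilde α₁ α₂ c lam s‖ ≤ 2 * Real.exp 1 ^ 2 * R ^ (α₂ - α₁ - 1) := by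
  have hR0 : (0:ℝ) < R := lt_of_lt_of_le one_pos hR1
  have hs0 : s ≠ 0 := by
    intro h; rw [h] at hsre; simp at hsre
  have hdre : 0 < (s + c).re := by simp [Complex.add_re]; positivity
  have hd : s + (c:ℂ) ≠ 0 := by
    intro h; rw [h] at hdre; simp at hdre
  have hRabs : R ≤ ‖s‖ := hsim ▸ Complex.abs_im_le_norm s
  have h1abs : 1 ≤ ‖s‖ := le_trans hR1 hRabs
  set w := gfun α₁ α₂ c s with hw
  set K := (α₂ - α₁) * c with hKdef
  have hK : 0 < K := mul_pos (by linarith) hc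
  have h_eq : w = (α₁ : ℂ) + ((K : ℝ) : ℂ) / (s + c) := by
    rw [hw, hKdef]; unfold gfun; field_simp; push_cast; ring
  set N := Complex.normSq (s + c) with hNdef
  have hNpos : 0 < N := Complex.normSq_pos.2 hd
  have hNe : N = (s.re + c)^2 + s.im^2 := by
    rw [hNdef, Complex.normSq_apply]; simp [Complex.add_re, Complex.add_im]; ring
  have hre : w.re = α₁ + K * (s.re + c) / N := by
    rw [h_eq]; simp [Complex.div_re, Complex.add_re]; rfl
  have him : w.im = -(K * s.im) / N := by
    rw [h_eq]; simp [Complex.div_im, Complex.add_im, neg_div]; rfl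
  have hsrec : 0 < s.re + c := by positivity
  have hre_lb : α₁ ≤ w.re := by
    rw [hre]; nlinarith [mul_pos (mul_pos hK hsrec) (inv_pos.2 hNpos),
      div_nonneg (le_of_lt (mul_pos hK hsrec)) hNpos.le]
  have hre_ub : w.re ≤ α₂ := by
    rw [hre]
    have h1 : K * (s.re + c) / N ≤ K * (s.re + c) / (s.re + c)^2 := by
      apply div_le_div_of_nonneg_left (by positivity) (by positivity)
      rw [hNe]; nlinarith [sq_nonneg s.im]
    have h2 : K * (s.re + c) / (s.re + c)^2 = K / (s.re + c) := by
      field_simp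
    have h3 : K / (s.re + c) ≤ K / c := by
      apply div_le_div_of_nonneg_left hK.le hc; linarith
    have h4 : K / c = α₂ - α₁ := by rw [hKdef]; field_simp
    linarith [h1, h3, h2 ▸ h1]
  have hre_ub1 : w.re - 1 ≤ α₂ - 1 := by linarith
  have him_b : |w.im| ≤ K / R := by
    rw [him]
    rw [abs_div, abs_neg, abs_mul, abs_of_pos hK, abs_of_pos hNpos]
    rw [hsim]
    have hN2 : R^2 ≤ N := by rw [hNe]; nlinarith [sq_nonneg (s.re + c), sq_abs s.im, hsim]
    calc K * R / N ≤ K * R / R^2 := by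
          apply div_le_div_of_nonneg_left (by positivity) (by positivity) hN2
      _ = K / R := by field_simp
  have harg : |Complex.arg s| ≤ Real.pi := Complex.abs_arg_le_pi s
  have hprod : |Complex.arg s * w.im| ≤ 1 := by
    rw [abs_mul]
    calc |Complex.arg s| * |w.im| ≤ Real.pi * (K / R) := by
          apply mul_le_mul harg him_b (abs_nonneg _) Real.pi_pos.le
      _ ≤ 1 := by rw [show Real.pi*(K/R) = Real.pi*K/R by ring, div_le_one hR0]; exact hR2
  -- numerator bound
  have habs_num : ‖s ^ (w - 1)‖ ≤ R ^ (α₂ - 1) * Real.exp 1 := by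
    rw [Complex.norm_cpow_of_ne_zero hs0]
    have him1 : (w - 1).im = w.im := by simp
    have hre1 : (w - 1).re = w.re - 1 := by simp
    rw [him1, hre1]
    have hexp_lb : Real.exp (-1) ≤ Real.exp (Complex.arg s * w.im) :=
      Real.exp_le_exp.2 (neg_le_of_abs_le hprod)
    have hnum1 : ‖s‖ ^ (w.re - 1) ≤ R ^ (α₂ - 1) := by
      calc ‖s‖ ^ (w.re - 1) ≤ ‖s‖ ^ (α₂ - 1) :=
            Real.rpow_le_rpow_of_exponent_le h1abs hre_ub1
        _ ≤ R ^ (α₂ - 1) := Real.rpow_le_rpow_of_nonpos hR0 hRabs (by linarith)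
    calc ‖s‖ ^ (w.re - 1) / Real.exp (Complex.arg s * w.im)
        ≤ R ^ (α₂ - 1) / Real.exp (-1) :=
          div_le_div₀ (by positivity) hnum1 (Real.exp_pos _) hexp_lb
      _ = R ^ (α₂ - 1) * Real.exp 1 := by
          rw [Real.exp_neg]; field_simp
  -- denominator bound
  have hden : R ^ α₁ / (2 * Real.exp 1) ≤ ‖s ^ w + (lam : ℂ)‖ := by
    have habs_pow : R ^ α₁ / Real.exp 1 ≤ ‖s ^ w‖ := by
      rw [Complex.norm_cpow_of_ne_zero hs0]
      have hA : R ^ α₁ ≤ ‖s‖ ^ w.re :=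
        calc R ^ α₁ ≤ R ^ w.re := Real.rpow_le_rpow_of_exponent_le hR1 hre_lb
          _ ≤ ‖s‖ ^ w.re := Real.rpow_le_rpow hR0.le hRabs (by linarith)
      exact div_le_div₀ (by positivity) hA (Real.exp_pos _)
        (Real.exp_le_exp.2 (le_of_abs_le hprod))
    have htri : ‖s ^ w‖ - lam ≤ ‖s ^ w + (lam : ℂ)‖ := by
      have h := norm_sub_norm_le (s ^ w) (-(lam : ℂ))
      simp only [sub_neg_eq_add, norm_neg] at h
      rwa [Complex.norm_real, Real.norm_eq_abs, abs_of_pos hlam] at h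
    have hlam2 : lam ≤ R ^ α₁ / (2 * Real.exp 1) := by
      rw [le_div_iff₀ (by positivity), mul_comm]; exact hR3
    have : R ^ α₁ / Real.exp 1 - R ^ α₁ / (2 * Real.exp 1) = R ^ α₁ / (2 * Real.exp 1) := by
      field_simp; ring
    linarith [habs_pow, htri]
  -- conclude
  have hU : utilde α₁ α₂ c lam s = s ^ (w - 1) / (s ^ w + (lam : ℂ)) := rfl
  rw [hU, norm_div]
  have hdenpos : (0:ℝ) < R ^ α₁ / (2 * Real.exp 1) := by positivity
  have hsplit : R ^ (α₂ - α₁ - 1) = R ^ (α₂ - 1) / R ^ α₁ := by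
    rw [← Real.rpow_sub hR0]; ring_nf
  calc ‖s ^ (w - 1)‖ / ‖s ^ w + (lam : ℂ)‖
      ≤ (R ^ (α₂ - 1) * Real.exp 1) / (R ^ α₁ / (2 * Real.exp 1)) :=
        div_le_div₀ (by positivity) habs_num hdenpos hden
    _ = 2 * Real.exp 1 ^ 2 * R ^ (α₂ - α₁ - 1) := by
        rw [hsplit, show Real.exp 1 ^ 2 = Real.exp 2 by rw [sq, ← Real.exp_add]; norm_num]
        have h1 : R ^ α₁ ≠ 0 := by positivity
        have h2 : Real.exp 2 ≠ 0 := (Real.exp_pos 2).ne'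
        have h3 : Real.exp 1 ≠ 0 := (Real.exp_pos 1).ne'
        field_simp
        ring_nf
        rw [sq, ← Real.exp_add]
        norm_num

lemma seg_vanish (α₁ α₂ c lam t s₀ : ℝ) (h0 : 0 < α₁) (h12 : α₁ < α₂) (h21 : α₂ < 1)
    (hc : 0 < c) (hlam : 0 < lam) (ht : 0 < t) (hs₀ : 0 < s₀)
    (f : ℝ → ℝ → ℂ) (hfre : ∀ x R, (f x R).re = x)
    (hfim : ∀ x R, 0 ≤ R → |(f x R).im| = R) :
    Tendsto (fun R : ℝ => ∫ x in (0:ℝ)..s₀,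
      utilde α₁ α₂ c lam (f x R) * Complex.exp (f x R * (t:ℂ))) atTop (nhds 0) := by
  have hlim : Tendsto (fun R : ℝ =>
      (2 * Real.exp 1 ^ 2 * Real.exp (s₀ * t) * R ^ (α₂ - α₁ - 1)) * |s₀ - 0|)
      atTop (nhds 0) := by
    have h1 : Tendsto (fun R : ℝ => R ^ (α₂ - α₁ - 1)) atTop (nhds 0) := by
      simpa [show -(1 + α₁ - α₂) = α₂ - α₁ - 1 by ring] using
        tendsto_rpow_neg_atTop (show (0:ℝ) < 1 + α₁ - α₂ by linarith)
    simpa only [mul_zero, zero_mul] using (h1.const_mul (2 * Real.exp 1 ^ 2 * Real.exp (s₀ * t))).mul_const |s₀ - 0|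
  apply squeeze_zero_norm' ?_ hlim
  filter_upwards [eventually_ge_atTop (1:ℝ), eventually_ge_atTop (Real.pi * ((α₂ - α₁) * c)),
    (tendsto_rpow_atTop h0).eventually_ge_atTop (2 * Real.exp 1 * lam)] with R hR1 hR2 hR3
  apply intervalIntegral.norm_integral_le_of_norm_le_const
  intro x hx
  rw [Set.uIoc_of_le hs₀.le] at hx
  have hR0 : (0:ℝ) ≤ R := le_trans zero_le_one hR1
  have hsre : 0 < (f x R).re := by rw [hfre]; exact hx.1
  have hsim : |(f x R).im| = R := hfim x R hR0
  have hb := utilde_bound α₁ α₂ c lam h0 h12 h21 hc hlam hsre hsim hR1 hR2 hR3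
  rw [norm_mul]
  have hexp_bound : ‖Complex.exp (f x R * (t:ℂ))‖ ≤ Real.exp (s₀ * t) := by
    rw [Complex.norm_exp]
    apply Real.exp_le_exp.2
    have h : (f x R * (t:ℂ)).re = (f x R).re * t := by
      simp [Complex.mul_re]
    rw [h, hfre]
    exact mul_le_mul_of_nonneg_right hx.2 ht.le
  calc ‖utilde α₁ α₂ c lam (f x R)‖ * ‖Complex.exp (f x R * (t:ℂ))‖
      ≤ (2 * Real.exp 1 ^ 2 * R ^ (α₂ - α₁ - 1)) * Real.exp (s₀ * t) := by
        apply mul_le_mul hb hexp_bound (norm_nonneg _)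
        exact mul_nonneg (by positivity) (Real.rpow_nonneg hR0 _)
    _ = 2 * Real.exp 1 ^ 2 * Real.exp (s₀ * t) * R ^ (α₂ - α₁ - 1) := by ring

/-- The integrals of `ũ(s)·e^{s t}` over the horizontal segments at height `±R` joining the
Bromwich line `Re s = s₀` to the imaginary axis vanish as `R → ∞`. -/
theorem horizontal_segments_vanish
    (α₁ α₂ c lam t s₀ : ℝ) (h0 : 0 < α₁) (h12 : α₁ < α₂) (h21 : α₂ < 1)
    (hc : 0 < c) (hlam : 0 < lam) (ht : 0 < t) (hs₀ : 0 < s₀)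
    (hnz : ∀ s : ℂ, s ≠ 0 → s ≠ -(c : ℂ) → s ^ gfun α₁ α₂ c s + (lam : ℂ) ≠ 0) :
    Tendsto (fun R : ℝ => ∫ x in (0 : ℝ)..s₀,
        utilde α₁ α₂ c lam ((x : ℂ) + (R : ℂ) * Complex.I) *
          Complex.exp (((x : ℂ) + (R : ℂ) * Complex.I) * (t : ℂ)))
      atTop (nhds 0) ∧
    Tendsto (fun R : ℝ => ∫ x in (0 : ℝ)..s₀,
        utilde α₁ α₂ c lam ((x : ℂ) - (R : ℂ) * Complex.I) *
          Complex.exp (((x : ℂ) - (R : ℂ) * Complex.I) * (t : ℂ)))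
      atTop (nhds 0) := by
  constructor
  · exact seg_vanish α₁ α₂ c lam t s₀ h0 h12 h21 hc hlam ht hs₀
      (fun x R => (x : ℂ) + (R : ℂ) * Complex.I)
      (fun x R => by simp) (fun x R hR => by simp [abs_of_nonneg hR])
  · exact seg_vanish α₁ α₂ c lam t s₀ h0 h12 h21 hc hlam ht hs₀
      (fun x R => (x : ℂ) - (R : ℂ) * Complex.I)
      (fun x R => by simp) (fun x R hR => by simp [abs_of_nonneg hR])
end

section
/- Assume s^{g(s)} + λ ≠ 0 for every s ∈ ℂ ∖ {0, −c}. Then the integral of ũ(s)·e^{s t} over the small circle of radius ε around the origin vanishes as ε → 0⁺: lim_{ε→0⁺} ∫_{−π}^{π} ũ(ε e^{iθ}) e^{ε e^{iθ} t} · i ε e^{iθ} dθ = 0. -/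
open MeasureTheory Filter Set

/-- The integral of `ũ(s)·e^{s t}` over the small circle of radius `ε` around the origin
vanishes as `ε → 0⁺`. -/
theorem small_circle_vanishes
    (α₁ α₂ c lam t : ℝ) (h0 : 0 < α₁) (h12 : α₁ < α₂) (h21 : α₂ < 1)
    (hc : 0 < c) (hlam : 0 < lam) (ht : 0 < t)
    (hnz : ∀ s : ℂ, s ≠ 0 → s ≠ -(c : ℂ) → s ^ gfun α₁ α₂ c s + (lam : ℂ) ≠ 0) :
    Tendsto (fun ε : ℝ => ∫ θ in (-Real.pi)..Real.pi,
        utilde α₁ α₂ c lam ((ε : ℂ) * Complex.exp ((θ : ℂ) * Complex.I)) *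
          Complex.exp ((ε : ℂ) * Complex.exp ((θ : ℂ) * Complex.I) * (t : ℂ)) *
          (Complex.I * (ε : ℂ) * Complex.exp ((θ : ℂ) * Complex.I)))
      (nhdsWithin 0 (Set.Ioi 0)) (nhds 0) := by
  have hα2 : 0 < α₂ := lt_trans h0 h12
  set p : ℝ := α₂ / 2 with hpdef
  have hppos : 0 < p := by positivity
  have hplt : p < 1 := by simp only [hpdef]; linarith
  set K : ℝ := Real.exp Real.pi * Real.exp t * (2 / lam) * (2 * Real.pi) with hKdef
  -- ε ↦ ε^p tends to 0 along 𝓝[>]0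
  have hrp : Tendsto (fun ε : ℝ => ε ^ p) (nhdsWithin 0 (Ioi 0)) (nhds 0) := by
    have h1 : ContinuousAt (fun ε : ℝ => ε ^ p) 0 :=
      Real.continuousAt_rpow_const 0 p (Or.inr hppos.le)
    have h2 : Tendsto (fun ε : ℝ => ε ^ p) (nhds 0) (nhds 0) := by
      simpa [Real.zero_rpow hppos.ne'] using h1.tendsto
    exact h2.mono_left nhdsWithin_le_nhds
  have hM : Tendsto (fun ε : ℝ => ε ^ p * K) (nhdsWithin 0 (Ioi 0)) (nhds 0) := by
    simpa using hrp.mul_const K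
  apply squeeze_zero_norm' _ hM
  -- eventual smallness conditions
  have hpos : ∀ᶠ ε : ℝ in nhdsWithin 0 (Ioi 0), ε ∈ Ioi (0:ℝ) := self_mem_nhdsWithin
  have hd : (0:ℝ) < min 1 (min (c/2) (c * α₂ / (8 * (α₂ - α₁)))) := by
    have : (0:ℝ) < c * α₂ / (8 * (α₂ - α₁)) := by
      apply div_pos (by positivity); nlinarith
    simp only [lt_min_iff]; exact ⟨one_pos, by positivity, this⟩
  have hsmall : ∀ᶠ ε : ℝ in nhdsWithin 0 (Ioi 0),
      ε < min 1 (min (c/2) (c * α₂ / (8 * (α₂ - α₁)))) := by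
    have := Ioo_mem_nhdsGT_of_mem (c := (0:ℝ)) (a := min 1 (min (c/2) (c * α₂ / (8 * (α₂ - α₁)))))
      ⟨le_refl 0, hd⟩
    filter_upwards [this] with ε hε using hε.2
  have hlamcond : ∀ᶠ ε : ℝ in nhdsWithin 0 (Ioi 0),
      ε ^ p * Real.exp Real.pi < lam / 2 := by
    have h3 : Tendsto (fun ε : ℝ => ε ^ p * Real.exp Real.pi) (nhdsWithin 0 (Ioi 0)) (nhds 0) := by
      simpa using hrp.mul_const (Real.exp Real.pi)
    exact h3.eventually (gt_mem_nhds (by positivity))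
  filter_upwards [hpos, hsmall, hlamcond] with ε hεpos hεsmall hεlam
  simp only [mem_Ioi] at hεpos
  rw [lt_min_iff, lt_min_iff] at hεsmall
  obtain ⟨hε1, hεc, hεα⟩ := hεsmall
  -- pointwise bound on the circle
  have key : ∀ θ ∈ Set.uIoc (-Real.pi) Real.pi,
      ‖utilde α₁ α₂ c lam ((ε : ℂ) * Complex.exp ((θ : ℂ) * Complex.I)) *
          Complex.exp ((ε : ℂ) * Complex.exp ((θ : ℂ) * Complex.I) * (t : ℂ)) *
          (Complex.I * (ε : ℂ) * Complex.exp ((θ : ℂ) * Complex.I))‖ ≤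
        ε ^ p * (Real.exp Real.pi * Real.exp t * (2 / lam)) := by
    intro θ _
    set s : ℂ := (ε : ℂ) * Complex.exp ((θ : ℂ) * Complex.I) with hsdef
    set g : ℂ := gfun α₁ α₂ c s with hgdef
    have habs : ‖s‖ = ε := by
      simp [hsdef, Complex.norm_exp_ofReal_mul_I, abs_of_pos hεpos]
    have hsne : s ≠ 0 := by
      intro h; rw [h] at habs; simp at habs; exact hεpos.ne' habs.symm
    have hscne : s + (c : ℂ) ≠ 0 := by
      intro h
      have : ‖s‖ = c := by
        have : s = -(c:ℂ) := by linear_combination h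
        rw [this]; simp [abs_of_pos hc]
      rw [habs] at this; linarith
    -- g - α₂
    have hgsub : g - (α₂ : ℂ) = ((α₁ : ℂ) - α₂) * s / (s + c) := by
      rw [hgdef]; unfold gfun; field_simp; ring
    have habs_sc : c / 2 ≤ ‖s + c‖ := by
      have h1 : ‖(c : ℂ)‖ ≤ ‖s + c‖ + ‖s‖ := by
        have h0 : (c : ℂ) = (s + c) + (-s) := by ring
        calc ‖(c : ℂ)‖ = ‖(s + c) + (-s)‖ := by rw [← h0]
          _ ≤ ‖s + c‖ + ‖-s‖ := norm_add_le _ _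
          _ = ‖s + c‖ + ‖s‖ := by rw [norm_neg]
      have h2 : ‖(c : ℂ)‖ = c := by simp [abs_of_pos hc]
      rw [h2, habs] at h1; linarith
    have habs_sub : ‖g - (α₂ : ℂ)‖ ≤ α₂ / 4 := by
      rw [hgsub, norm_div, norm_mul, habs]
      have h1 : ‖(α₁ : ℂ) - α₂‖ = α₂ - α₁ := by
        rw [← Complex.ofReal_sub, Complex.norm_real, Real.norm_eq_abs,
          abs_of_neg (by linarith : α₁ - α₂ < 0)]
        ring
      rw [h1]
      rw [div_le_iff₀ (by linarith)]
      calc (α₂ - α₁) * ε ≤ (α₂ - α₁) * (c * α₂ / (8 * (α₂ - α₁))) := by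
            apply mul_le_mul_of_nonneg_left hεα.le (by linarith)
        _ = c * α₂ / 8 := by
            have hne : α₂ - α₁ ≠ 0 := by linarith
            field_simp
        _ ≤ α₂ / 4 * (c / 2) := by ring_nf; linarith [le_refl (c * α₂ / 8)]
        _ ≤ α₂ / 4 * ‖s + c‖ := by
            apply mul_le_mul_of_nonneg_left habs_sc (by linarith)
    have hre : p ≤ g.re := by
      have h1 : |(g - (α₂ : ℂ)).re| ≤ α₂ / 4 :=
        le_trans (Complex.abs_re_le_norm _) habs_sub
      have h2 : (g - (α₂ : ℂ)).re = g.re - α₂ := by simp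
      rw [h2] at h1
      have := abs_le.mp h1
      simp only [hpdef]; linarith [this.1]
    have him : |g.im| ≤ α₂ / 4 := by
      have h1 : (g - (α₂ : ℂ)).im = g.im := by simp
      calc |g.im| = |(g - (α₂ : ℂ)).im| := by rw [h1]
        _ ≤ ‖g - (α₂ : ℂ)‖ := Complex.abs_im_le_norm _
        _ ≤ α₂ / 4 := habs_sub
    -- cpow bounds
    have hargim : ∀ w : ℂ, |w.im| ≤ α₂ / 4 →
        ‖s ^ w‖ ≤ ε ^ w.re * Real.exp Real.pi := by
      intro w hw
      calc ‖s ^ w‖ ≤ ‖s‖ ^ w.re / Real.exp (s.arg * w.im) :=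
            Complex.norm_cpow_le s w
        _ = ε ^ w.re * Real.exp (-(s.arg * w.im)) := by
            rw [habs, Real.exp_neg, div_eq_mul_inv]
        _ ≤ ε ^ w.re * Real.exp Real.pi := by
            apply mul_le_mul_of_nonneg_left _ (Real.rpow_nonneg hεpos.le _)
            apply Real.exp_le_exp.mpr
            have h1 : |s.arg * w.im| ≤ Real.pi * (α₂ / 4) := by
              rw [abs_mul]
              apply mul_le_mul (Complex.abs_arg_le_pi s) hw (abs_nonneg _) Real.pi_pos.le
            have h2 : Real.pi * (α₂ / 4) ≤ Real.pi := by
              nlinarith [Real.pi_pos]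
            have h3 : |s.arg * w.im| ≤ Real.pi := le_trans h1 h2
            linarith [neg_abs_le (s.arg * w.im), (abs_le.mp h3).1]
        _ = ε ^ w.re * Real.exp Real.pi := rfl
    -- denominator bound
    have hden : lam / 2 ≤ ‖s ^ g + (lam : ℂ)‖ := by
      have h1 : ‖s ^ g‖ ≤ lam / 2 := by
        calc ‖s ^ g‖ ≤ ε ^ g.re * Real.exp Real.pi := hargim g him
          _ ≤ ε ^ p * Real.exp Real.pi := by
              apply mul_le_mul_of_nonneg_right _ (Real.exp_pos _).le
              exact Real.rpow_le_rpow_of_exponent_ge hεpos hε1.le hre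
          _ ≤ lam / 2 := hεlam.le
      have h2 : ‖(lam : ℂ)‖ ≤ ‖s ^ g + lam‖ + ‖s ^ g‖ := by
        have h0 : (lam : ℂ) = (s ^ g + lam) + (-(s ^ g)) := by ring
        calc ‖(lam : ℂ)‖ = ‖(s ^ g + lam) + (-(s ^ g))‖ := by rw [← h0]
          _ ≤ ‖s ^ g + lam‖ + ‖-(s ^ g)‖ := norm_add_le _ _
          _ = ‖s ^ g + lam‖ + ‖s ^ g‖ := by rw [norm_neg]
      have h3 : ‖(lam : ℂ)‖ = lam := by
        simp [Complex.norm_real, abs_of_pos hlam]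
      rw [h3] at h2; linarith
    -- numerator bound
    have hnum : ‖s ^ (g - 1)‖ ≤ ε ^ (g.re - 1) * Real.exp Real.pi := by
      have h1 : |(g - 1).im| ≤ α₂ / 4 := by
        have : (g - 1).im = g.im := by simp
        rw [this]; exact him
      have := hargim (g - 1) h1
      have h2 : (g - 1).re = g.re - 1 := by simp
      rwa [h2] at this
    -- exponential bound
    have hexp : ‖Complex.exp (s * (t : ℂ))‖ ≤ Real.exp t := by
      rw [Complex.norm_exp]
      apply Real.exp_le_exp.mpr
      calc (s * (t : ℂ)).re ≤ ‖s * (t : ℂ)‖ := Complex.re_le_norm _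
        _ = ε * t := by rw [norm_mul, habs]; simp [abs_of_pos ht]
        _ ≤ 1 * t := by nlinarith
        _ = t := one_mul t
    -- assemble
    have hεt : ‖s‖ = ε := habs
    calc ‖utilde α₁ α₂ c lam s * Complex.exp (s * (t : ℂ)) *
            (Complex.I * (ε : ℂ) * Complex.exp ((θ : ℂ) * Complex.I))‖
        = ‖s ^ (g - 1)‖ / ‖s ^ g + (lam : ℂ)‖ *
            ‖Complex.exp (s * (t : ℂ))‖ * ε := by
          simp only [norm_mul, norm_div, utilde, ← hgdef]
          rw [Complex.norm_I, Complex.norm_exp_ofReal_mul_I]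
          rw [Complex.norm_real, Real.norm_eq_abs, abs_of_pos hεpos]
          ring
      _ ≤ (ε ^ (g.re - 1) * Real.exp Real.pi) / (lam / 2) * Real.exp t * ε := by
          have hd1 : ‖s ^ (g - 1)‖ / ‖s ^ g + (lam : ℂ)‖ ≤
              (ε ^ (g.re - 1) * Real.exp Real.pi) / (lam / 2) := by
            calc ‖s ^ (g - 1)‖ / ‖s ^ g + (lam : ℂ)‖
                ≤ ‖s ^ (g - 1)‖ / (lam / 2) :=
                  div_le_div_of_nonneg_left (norm_nonneg _) (by linarith) hden
              _ ≤ (ε ^ (g.re - 1) * Real.exp Real.pi) / (lam / 2) := by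
                  gcongr

          apply mul_le_mul_of_nonneg_right _ hεpos.le
          apply mul_le_mul hd1 hexp (norm_nonneg _)
          positivity
      _ = ε ^ g.re * (Real.exp Real.pi * Real.exp t * (2 / lam)) := by
          rw [Real.rpow_sub hεpos, Real.rpow_one]
          field_simp
      _ ≤ ε ^ p * (Real.exp Real.pi * Real.exp t * (2 / lam)) := by
          apply mul_le_mul_of_nonneg_right
            (Real.rpow_le_rpow_of_exponent_ge hεpos hε1.le hre)
          positivity
  have hbound := intervalIntegral.norm_integral_le_of_norm_le_const key
  calc ‖∫ θ in (-Real.pi)..Real.pi,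
        utilde α₁ α₂ c lam ((ε : ℂ) * Complex.exp ((θ : ℂ) * Complex.I)) *
          Complex.exp ((ε : ℂ) * Complex.exp ((θ : ℂ) * Complex.I) * (t : ℂ)) *
          (Complex.I * (ε : ℂ) * Complex.exp ((θ : ℂ) * Complex.I))‖ ≤
      ε ^ p * (Real.exp Real.pi * Real.exp t * (2 / lam)) * |Real.pi - (-Real.pi)| := hbound
    _ = ε ^ p * K := by
        rw [hKdef]
        have : |Real.pi - (-Real.pi)| = 2 * Real.pi := by
          rw [abs_of_pos (by linarith [Real.pi_pos])]; ring
        rw [this]; ring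
end

section
/- Boundary values of ũ on the branch cut: let ρ > 0 with ρ ≠ c, and assume 1 + λ ρ^{h(ρ)} e^{iπ h(ρ)} ≠ 0 and 1 + λ ρ^{h(ρ)} e^{−iπ h(ρ)} ≠ 0. Then lim_{δ→0⁺} ũ(−ρ + iδ) = −1 / (ρ(1 + λ ρ^{h(ρ)} e^{iπ h(ρ)})) and lim_{δ→0⁺} ũ(−ρ − iδ) = −1 / (ρ(1 + λ ρ^{h(ρ)} e^{−iπ h(ρ)})). -/
open MeasureTheory Filter Set

lemma utilde_tendsto_aux (α₁ α₂ c lam : ℝ) (ρ : ℝ) (hρc : ρ ≠ c)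
    (L : ℂ) (f : ℝ → ℂ)
    (hfne : ∀ δ ∈ Set.Ioi (0:ℝ), f δ ≠ 0)
    (hf : Tendsto f (nhdsWithin 0 (Set.Ioi 0)) (nhds (-(ρ:ℂ))))
    (hLog : Tendsto (fun δ => Complex.log (f δ)) (nhdsWithin 0 (Set.Ioi 0)) (nhds L))
    (hD : Complex.exp (L * gfun α₁ α₂ c (-(ρ:ℂ))) + (lam:ℂ) ≠ 0) :
    Tendsto (fun δ => utilde α₁ α₂ c lam (f δ)) (nhdsWithin 0 (Set.Ioi 0))
      (nhds (Complex.exp (L * (gfun α₁ α₂ c (-(ρ:ℂ)) - 1)) /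
        (Complex.exp (L * gfun α₁ α₂ c (-(ρ:ℂ))) + (lam:ℂ)))) := by
  have hden : (-(ρ:ℂ)) + c ≠ 0 := by
    intro H
    apply hρc
    have : (ρ:ℂ) = (c:ℂ) := by linear_combination -H
    exact_mod_cast this
  have hg : Tendsto (fun δ => gfun α₁ α₂ c (f δ)) (nhdsWithin 0 (Set.Ioi 0))
      (nhds (gfun α₁ α₂ c (-(ρ:ℂ)))) := by
    have hcont : ContinuousAt (gfun α₁ α₂ c) (-(ρ:ℂ)) := by
      apply ContinuousAt.div
      · fun_prop
      · fun_prop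
      · exact hden
    exact hcont.tendsto.comp hf
  have key : Tendsto (fun δ =>
      Complex.exp (Complex.log (f δ) * (gfun α₁ α₂ c (f δ) - 1)) /
        (Complex.exp (Complex.log (f δ) * gfun α₁ α₂ c (f δ)) + (lam:ℂ)))
      (nhdsWithin 0 (Set.Ioi 0))
      (nhds (Complex.exp (L * (gfun α₁ α₂ c (-(ρ:ℂ)) - 1)) /
        (Complex.exp (L * gfun α₁ α₂ c (-(ρ:ℂ))) + (lam:ℂ)))) :=
    ((hLog.mul (hg.sub tendsto_const_nhds)).cexp).div
      (((hLog.mul hg).cexp).add tendsto_const_nhds) hD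
  apply key.congr'
  filter_upwards [self_mem_nhdsWithin] with δ hδ
  unfold utilde
  rw [Complex.cpow_def_of_ne_zero (hfne δ hδ), Complex.cpow_def_of_ne_zero (hfne δ hδ)]


/-- Boundary values of `ũ` on the branch cut: for `ρ > 0`, `ρ ≠ c`,
`ũ(-ρ ± iδ) → -1/(ρ(1 + λ ρ^{h(ρ)} e^{±iπ h(ρ)}))` as `δ → 0⁺`. -/
theorem boundary_values_on_cut
    (α₁ α₂ c lam : ℝ) (h0 : 0 < α₁) (h12 : α₁ < α₂) (h21 : α₂ < 1)
    (hc : 0 < c) (hlam : 0 < lam) (ρ : ℝ) (hρ : 0 < ρ) (hρc : ρ ≠ c)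
    (hnzp : 1 + (lam : ℂ) * ((ρ ^ hfun α₁ α₂ c ρ : ℝ) : ℂ) *
        Complex.exp ((Real.pi : ℂ) * (hfun α₁ α₂ c ρ : ℂ) * Complex.I) ≠ 0)
    (hnzm : 1 + (lam : ℂ) * ((ρ ^ hfun α₁ α₂ c ρ : ℝ) : ℂ) *
        Complex.exp (-((Real.pi : ℂ) * (hfun α₁ α₂ c ρ : ℂ) * Complex.I)) ≠ 0) :
    Tendsto (fun δ : ℝ => utilde α₁ α₂ c lam (-(ρ : ℂ) + (δ : ℂ) * Complex.I))
      (nhdsWithin 0 (Set.Ioi 0))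
      (nhds (-1 / ((ρ : ℂ) * (1 + (lam : ℂ) * ((ρ ^ hfun α₁ α₂ c ρ : ℝ) : ℂ) *
        Complex.exp ((Real.pi : ℂ) * (hfun α₁ α₂ c ρ : ℂ) * Complex.I))))) ∧
    Tendsto (fun δ : ℝ => utilde α₁ α₂ c lam (-(ρ : ℂ) - (δ : ℂ) * Complex.I))
      (nhdsWithin 0 (Set.Ioi 0))
      (nhds (-1 / ((ρ : ℂ) * (1 + (lam : ℂ) * ((ρ ^ hfun α₁ α₂ c ρ : ℝ) : ℂ) *
        Complex.exp (-((Real.pi : ℂ) * (hfun α₁ α₂ c ρ : ℂ) * Complex.I)))))) := by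
  set h : ℝ := hfun α₁ α₂ c ρ with hh
  set R : ℂ := ((ρ ^ h : ℝ) : ℂ) with hRdef
  set E : ℂ := Complex.exp ((Real.pi : ℂ) * (h : ℂ) * Complex.I) with hEdef
  have hρ0 : (ρ:ℂ) ≠ 0 := by exact_mod_cast hρ.ne'
  have hcρ : (c:ℂ) - ρ ≠ 0 := fun H => hρc (by exact_mod_cast (sub_eq_zero.mp H).symm)
  have hden2 : (-(ρ:ℂ) + c) ≠ 0 := by rw [show -(ρ:ℂ)+(c:ℂ) = (c:ℂ)-ρ by ring]; exact hcρ
  -- g(-ρ) = -h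
  have hgval : gfun α₁ α₂ c (-(ρ:ℂ)) = -(h:ℂ) := by
    rw [hh]
    unfold gfun hfun
    push_cast
    field_simp
    ring
  have hR : R = Complex.exp ((h:ℂ) * (Real.log ρ : ℂ)) := by
    rw [hRdef, Real.rpow_def_of_pos hρ, Complex.ofReal_exp, mul_comm]
    norm_cast
  have hR0 : R ≠ 0 := by rw [hR]; exact Complex.exp_ne_zero _
  have hE0 : E ≠ 0 := Complex.exp_ne_zero _
  have hexpρ : Complex.exp ((Real.log ρ : ℂ)) = (ρ:ℂ) := by
    rw [← Complex.ofReal_exp, Real.exp_log hρ]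
  have hexpπ : Complex.exp ((Real.pi : ℂ) * Complex.I) = -1 := Complex.exp_pi_mul_I
  constructor
  · -- upper boundary
    set L : ℂ := (Real.log ρ : ℂ) + Real.pi * Complex.I with hL
    have hEL : Complex.exp (L * (-(h:ℂ))) = (R * E)⁻¹ := by
      rw [show L * (-(h:ℂ)) = -((h:ℂ) * (Real.log ρ : ℂ) + (Real.pi:ℂ) * (h:ℂ) * Complex.I) by
          rw [hL]; ring,
        Complex.exp_neg, Complex.exp_add, ← hR, ← hEdef]
    have hEL1 : Complex.exp (L * (-(h:ℂ) - 1)) = -((R * E)⁻¹ * (ρ:ℂ)⁻¹) := by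
      rw [show L * (-(h:ℂ) - 1) = (L * (-(h:ℂ))) + (-(Real.log ρ:ℂ) + -((Real.pi:ℂ)*Complex.I))
          by rw [hL]; ring,
        Complex.exp_add, Complex.exp_add, hEL, Complex.exp_neg, Complex.exp_neg, hexpρ, hexpπ]
      field_simp
    have hD : Complex.exp (L * gfun α₁ α₂ c (-(ρ:ℂ))) + (lam:ℂ) ≠ 0 := by
      rw [hgval, hEL]
      intro H
      apply hnzp
      have : ((R*E)⁻¹ + (lam:ℂ)) * (R*E) = 1 + (lam:ℂ) * R * E := by
        field_simp
        try ring
      rw [← this, H, zero_mul]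
    have hval : Complex.exp (L * (-(h:ℂ) - 1)) /
        (Complex.exp (L * -(h:ℂ)) + (lam:ℂ))
        = -1 / ((ρ:ℂ) * (1 + (lam:ℂ) * R * E)) := by
      rw [hEL1, hEL]
      rw [div_eq_div_iff (by rwa [hgval, hEL] at hD) (mul_ne_zero hρ0 hnzp)]
      field_simp
    have hfne : ∀ δ ∈ Set.Ioi (0:ℝ), (-(ρ:ℂ) + (δ:ℂ) * Complex.I) ≠ 0 := by
      intro δ hδ H
      have : (-(ρ:ℂ) + (δ:ℂ) * Complex.I).im = δ := by simp
      rw [H] at this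
      simp at this
      exact (mem_Ioi.mp hδ).ne' this.symm
    have hf : Tendsto (fun δ : ℝ => -(ρ:ℂ) + (δ:ℂ) * Complex.I)
        (nhdsWithin 0 (Set.Ioi 0)) (nhds (-(ρ:ℂ))) := by
      have hco : Continuous (fun δ : ℝ => -(ρ:ℂ) + (δ:ℂ) * Complex.I) := by fun_prop
      simpa using (hco.tendsto 0).mono_left nhdsWithin_le_nhds
    have hLog : Tendsto (fun δ : ℝ => Complex.log (-(ρ:ℂ) + (δ:ℂ) * Complex.I))
        (nhdsWithin 0 (Set.Ioi 0)) (nhds L) := by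
      have hmem : Tendsto (fun δ : ℝ => -(ρ:ℂ) + (δ:ℂ) * Complex.I)
          (nhdsWithin 0 (Set.Ioi 0)) (nhdsWithin (-(ρ:ℂ)) {z : ℂ | 0 ≤ z.im}) := by
        apply tendsto_nhdsWithin_of_tendsto_nhds_of_eventually_within _ hf
        filter_upwards [self_mem_nhdsWithin] with δ hδ
        simp [le_of_lt (mem_Ioi.mp hδ)]
      have hre : (-(ρ:ℂ)).re < 0 := by simpa using hρ
      have him : (-(ρ:ℂ)).im = 0 := by simp
      have := (Complex.tendsto_log_nhdsWithin_im_nonneg_of_re_neg_of_im_zero hre him).comp hmem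
      rw [show Real.log ‖(-(ρ:ℂ))‖ = Real.log ρ by
        rw [norm_neg, Complex.norm_real, Real.norm_eq_abs, abs_of_pos hρ]] at this
      exact this
    have := utilde_tendsto_aux α₁ α₂ c lam ρ hρc L _ hfne hf hLog hD
    rw [hgval, hval] at this
    exact this
  · -- lower boundary
    set L : ℂ := (Real.log ρ : ℂ) - Real.pi * Complex.I with hL
    have hEL : Complex.exp (L * (-(h:ℂ))) = R⁻¹ * E := by
      rw [show L * (-(h:ℂ)) = -((h:ℂ) * (Real.log ρ : ℂ)) + (Real.pi:ℂ) * (h:ℂ) * Complex.I by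
          rw [hL]; ring,
        Complex.exp_add, Complex.exp_neg, ← hR, ← hEdef]
    have hEL1 : Complex.exp (L * (-(h:ℂ) - 1)) = -(R⁻¹ * E * (ρ:ℂ)⁻¹) := by
      rw [show L * (-(h:ℂ) - 1) = (L * (-(h:ℂ))) + (-(Real.log ρ:ℂ) + (Real.pi:ℂ)*Complex.I)
          by rw [hL]; ring,
        Complex.exp_add, Complex.exp_add, hEL, Complex.exp_neg, hexpρ, hexpπ]
      field_simp
    have hEinv : Complex.exp (-((Real.pi : ℂ) * (h : ℂ) * Complex.I)) = E⁻¹ := by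
      rw [Complex.exp_neg, hEdef]
    have hnzm' : 1 + (lam:ℂ) * R * E⁻¹ ≠ 0 := by rwa [hEinv] at hnzm
    have hD : Complex.exp (L * gfun α₁ α₂ c (-(ρ:ℂ))) + (lam:ℂ) ≠ 0 := by
      rw [hgval, hEL]
      intro H
      apply hnzm'
      have : (R⁻¹ * E + (lam:ℂ)) * (R * E⁻¹) = 1 + (lam:ℂ) * R * E⁻¹ := by
        field_simp
        try ring
      rw [← this, H, zero_mul]
    have hval : Complex.exp (L * (-(h:ℂ) - 1)) /
        (Complex.exp (L * -(h:ℂ)) + (lam:ℂ))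
        = -1 / ((ρ:ℂ) * (1 + (lam:ℂ) * R * E⁻¹)) := by
      rw [hEL1, hEL]
      rw [div_eq_div_iff (by rwa [hgval, hEL] at hD) (mul_ne_zero hρ0 hnzm')]
      field_simp
    have hfne : ∀ δ ∈ Set.Ioi (0:ℝ), (-(ρ:ℂ) - (δ:ℂ) * Complex.I) ≠ 0 := by
      intro δ hδ H
      have : (-(ρ:ℂ) - (δ:ℂ) * Complex.I).im = -δ := by simp
      rw [H] at this
      simp at this
      exact (mem_Ioi.mp hδ).ne' this
    have hf : Tendsto (fun δ : ℝ => -(ρ:ℂ) - (δ:ℂ) * Complex.I)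
        (nhdsWithin 0 (Set.Ioi 0)) (nhds (-(ρ:ℂ))) := by
      have hco : Continuous (fun δ : ℝ => -(ρ:ℂ) - (δ:ℂ) * Complex.I) := by fun_prop
      simpa using (hco.tendsto 0).mono_left nhdsWithin_le_nhds
    have hLog : Tendsto (fun δ : ℝ => Complex.log (-(ρ:ℂ) - (δ:ℂ) * Complex.I))
        (nhdsWithin 0 (Set.Ioi 0)) (nhds L) := by
      have hmem : Tendsto (fun δ : ℝ => -(ρ:ℂ) - (δ:ℂ) * Complex.I)
          (nhdsWithin 0 (Set.Ioi 0)) (nhdsWithin (-(ρ:ℂ)) {z : ℂ | z.im < 0}) := by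
        apply tendsto_nhdsWithin_of_tendsto_nhds_of_eventually_within _ hf
        filter_upwards [self_mem_nhdsWithin] with δ hδ
        simp [mem_Ioi.mp hδ]
      have hre : (-(ρ:ℂ)).re < 0 := by simpa using hρ
      have him : (-(ρ:ℂ)).im = 0 := by simp
      have := (Complex.tendsto_log_nhdsWithin_im_neg_of_re_neg_of_im_zero hre him).comp hmem
      rw [show Real.log ‖(-(ρ:ℂ))‖ = Real.log ρ by
        rw [norm_neg, Complex.norm_real, Real.norm_eq_abs, abs_of_pos hρ]] at this
      exact this
    have := utilde_tendsto_aux α₁ α₂ c lam ρ hρc L _ hfne hf hLog hD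
    rw [hgval, hval] at this
    rw [hEinv]
    exact this
end

section
/- Assume in addition c > 1. Then the boundary integrand has a finite left-sided limit at ρ = c: lim_{ρ→c⁻} e^{−ρ t} / (−ρ(1 + λ ρ^{h(ρ)} e^{iπ h(ρ)})) = −e^{−c t}/c. -/
open MeasureTheory Filter Set

/-- If `c > 1`, the boundary integrand has a finite left-sided limit at `ρ = c`:
`e^{-ρ t}/(-ρ(1 + λ ρ^{h(ρ)} e^{iπ h(ρ)})) → -e^{-c t}/c` as `ρ → c⁻`. -/
theorem boundary_integrand_left_limit
    (α₁ α₂ c lam t : ℝ) (h0 : 0 < α₁) (h12 : α₁ < α₂) (h21 : α₂ < 1)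
    (hc : 0 < c) (hlam : 0 < lam) (ht : 0 < t) (hc1 : 1 < c) :
    Tendsto (fun ρ : ℝ => ((Real.exp (-ρ * t) : ℝ) : ℂ) /
        (-(ρ : ℂ) * (1 + (lam : ℂ) * ((ρ ^ hfun α₁ α₂ c ρ : ℝ) : ℂ) *
          Complex.exp ((Real.pi : ℂ) * (hfun α₁ α₂ c ρ : ℂ) * Complex.I))))
      (nhdsWithin c (Set.Iio c))
      (nhds (-(((Real.exp (-c * t) : ℝ) : ℂ)) / (c : ℂ))) := by
  set l := nhdsWithin c (Set.Iio c) with hl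
  -- eventually ρ > 1
  have h_mem : ∀ᶠ ρ : ℝ in l, 1 < ρ ∧ ρ < c := by
    have h1 : ∀ᶠ ρ : ℝ in l, 1 < ρ :=
      eventually_nhdsWithin_of_eventually_nhds (eventually_gt_nhds hc1)
    have h2 : ∀ᶠ ρ : ℝ in l, ρ < c := eventually_mem_nhdsWithin.mono (fun x hx => hx)
    exact h1.and h2
  -- c - ρ → 0⁺
  have hsub : Tendsto (fun ρ : ℝ => c - ρ) l (nhdsWithin 0 (Set.Ioi 0)) := by
    apply tendsto_nhdsWithin_of_tendsto_nhds_of_eventually_within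
    · have : Tendsto (fun ρ : ℝ => c - ρ) (nhds c) (nhds (c - c)) :=
        (tendsto_const_nhds.sub tendsto_id)
      simpa using this.mono_left nhdsWithin_le_nhds
    · exact h_mem.mono (fun ρ hρ => by simp [sub_pos.mpr hρ.2])
  have hinv : Tendsto (fun ρ : ℝ => (c - ρ)⁻¹) l atTop :=
    tendsto_inv_nhdsGT_zero.comp hsub
  -- numerator of h tends to negative constant
  have hnum : Tendsto (fun ρ : ℝ => α₁ * ρ - α₂ * c) l (nhds (α₁ * c - α₂ * c)) := by
    have : Tendsto (fun ρ : ℝ => α₁ * ρ - α₂ * c) (nhds c) (nhds (α₁ * c - α₂ * c)) := by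
      exact ((tendsto_const_nhds.mul tendsto_id).sub tendsto_const_nhds)
    exact this.mono_left nhdsWithin_le_nhds
  have hCneg : α₁ * c - α₂ * c < 0 := by nlinarith
  have hh : Tendsto (fun ρ : ℝ => hfun α₁ α₂ c ρ) l atBot := by
    have := hnum.neg_mul_atTop hCneg hinv
    refine this.congr (fun ρ => ?_)
    simp [hfun, div_eq_mul_inv]
  -- ln ρ → ln c > 0
  have hln : Tendsto (fun ρ : ℝ => Real.log ρ) l (nhds (Real.log c)) :=
    ((Real.continuousAt_log (by positivity)).tendsto.comp
      (tendsto_id.mono_left nhdsWithin_le_nhds))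
  have hlogc : 0 < Real.log c := Real.log_pos hc1
  -- h * ln ρ → -∞
  have hprod : Tendsto (fun ρ : ℝ => hfun α₁ α₂ c ρ * Real.log ρ) l atBot :=
    hh.atBot_mul_pos hlogc hln
  -- ρ ^ h → 0
  have hrpow : Tendsto (fun ρ : ℝ => ρ ^ hfun α₁ α₂ c ρ) l (nhds 0) := by
    have hexp : Tendsto (fun ρ : ℝ => Real.exp (hfun α₁ α₂ c ρ * Real.log ρ)) l (nhds 0) :=
      Real.tendsto_exp_atBot.comp hprod
    refine hexp.congr' (h_mem.mono (fun ρ hρ => ?_))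
    show Real.exp _ = ρ ^ hfun α₁ α₂ c ρ
    rw [Real.rpow_def_of_pos (lt_trans one_pos hρ.1), mul_comm]
  -- the complex perturbation term → 0
  have hterm : Tendsto (fun ρ : ℝ => (lam : ℂ) * ((ρ ^ hfun α₁ α₂ c ρ : ℝ) : ℂ) *
      Complex.exp ((Real.pi : ℂ) * (hfun α₁ α₂ c ρ : ℂ) * Complex.I)) l (nhds 0) := by
    rw [tendsto_zero_iff_norm_tendsto_zero]
    have : Tendsto (fun ρ : ℝ => lam * |ρ ^ hfun α₁ α₂ c ρ|) l (nhds (lam * |0|)) :=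
      tendsto_const_nhds.mul (hrpow.abs)
    simp only [abs_zero, mul_zero] at this
    refine this.congr (fun ρ => ?_)
    rw [norm_mul, norm_mul]
    have h1 : ‖Complex.exp ((Real.pi : ℂ) * (hfun α₁ α₂ c ρ : ℂ) * Complex.I)‖ = 1 := by
      rw [Complex.norm_exp]
      simp [Complex.mul_I_re]
    rw [h1]
    simp [abs_of_pos hlam]
  -- denominator → -c
  have hden : Tendsto (fun ρ : ℝ => -(ρ : ℂ) * (1 + (lam : ℂ) * ((ρ ^ hfun α₁ α₂ c ρ : ℝ) : ℂ) *
      Complex.exp ((Real.pi : ℂ) * (hfun α₁ α₂ c ρ : ℂ) * Complex.I))) l (nhds (-(c : ℂ))) := by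
    have hρ : Tendsto (fun ρ : ℝ => -(ρ : ℂ)) l (nhds (-(c : ℂ))) := by
      exact ((Complex.continuous_ofReal.tendsto c).comp
        (tendsto_id.mono_left nhdsWithin_le_nhds)).neg
    have h1 : Tendsto (fun ρ : ℝ => (1 : ℂ) + (lam : ℂ) * ((ρ ^ hfun α₁ α₂ c ρ : ℝ) : ℂ) *
        Complex.exp ((Real.pi : ℂ) * (hfun α₁ α₂ c ρ : ℂ) * Complex.I)) l (nhds 1) := by
      have := (tendsto_const_nhds : Tendsto (fun _ : ℝ => (1:ℂ)) l (nhds 1)).add hterm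
      simpa using this
    have := hρ.mul h1
    simpa using this
  -- numerator → exp(-ct)
  have hnum' : Tendsto (fun ρ : ℝ => ((Real.exp (-ρ * t) : ℝ) : ℂ)) l
      (nhds ((Real.exp (-c * t) : ℝ) : ℂ)) := by
    have : Tendsto (fun ρ : ℝ => Real.exp (-ρ * t)) (nhds c) (nhds (Real.exp (-c * t))) := by
      exact (Real.continuous_exp.comp ((continuous_id.neg).mul continuous_const)).tendsto c
    exact (Complex.continuous_ofReal.tendsto _).comp (this.mono_left nhdsWithin_le_nhds)
  have hne : (-(c : ℂ)) ≠ 0 := by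
    simp only [neg_ne_zero, Ne, Complex.ofReal_eq_zero]
    exact ne_of_gt hc
  have := hnum'.div hden hne
  rw [div_neg, ← neg_div] at this
  exact this
end

section
/- Asymptotic behaviour at infinity: as ρ → ∞, the boundary integrand is asymptotically equivalent to −e^{−ρ t}/(ρ + λ e^{−iπ α₁} ρ^{1−α₁}); precisely, lim_{ρ→∞} (ρ + λ e^{−iπ α₁} ρ^{1−α₁}) / (ρ(1 + λ ρ^{h(ρ)} e^{iπ h(ρ)})) = 1. -/
open MeasureTheory Filter Set

/-- Asymptotic behaviour at infinity: the boundary integrand is asymptotically equivalent to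
`-e^{-ρt}/(ρ + λ e^{-iπ α₁} ρ^{1-α₁})` as `ρ → ∞`; precisely,
`(ρ + λ e^{-iπ α₁} ρ^{1-α₁}) / (ρ(1 + λ ρ^{h(ρ)} e^{iπ h(ρ)})) → 1`. -/
theorem boundary_integrand_asymptotics_infinity
    (α₁ α₂ c lam t : ℝ) (h0 : 0 < α₁) (h12 : α₁ < α₂) (h21 : α₂ < 1)
    (hc : 0 < c) (hlam : 0 < lam) (ht : 0 < t) :
    Tendsto (fun ρ : ℝ =>
        ((ρ : ℂ) + (lam : ℂ) * Complex.exp (-((Real.pi : ℂ) * (α₁ : ℂ) * Complex.I)) *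
            ((ρ ^ (1 - α₁) : ℝ) : ℂ)) /
        ((ρ : ℂ) * (1 + (lam : ℂ) * ((ρ ^ hfun α₁ α₂ c ρ : ℝ) : ℂ) *
          Complex.exp ((Real.pi : ℂ) * (hfun α₁ α₂ c ρ : ℂ) * Complex.I))))
      atTop (nhds 1) := by
  -- h tends to -α₁
  have hh : Tendsto (fun ρ : ℝ => hfun α₁ α₂ c ρ) atTop (nhds (-α₁)) := by
    have h1 : Tendsto (fun ρ : ℝ => (α₁ - α₂ * c / ρ) / (c / ρ - 1)) atTop
        (nhds (-α₁)) := by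
      have hnum : Tendsto (fun ρ : ℝ => α₁ - α₂ * c / ρ) atTop (nhds (α₁ - 0)) :=
        tendsto_const_nhds.sub (tendsto_const_nhds.div_atTop tendsto_id)
      have hden : Tendsto (fun ρ : ℝ => c / ρ - 1) atTop (nhds (0 - 1)) :=
        (tendsto_const_nhds.div_atTop tendsto_id).sub tendsto_const_nhds
      have h2 := hnum.div hden (by norm_num : (0:ℝ) - 1 ≠ 0)
      have h3 : (α₁ - 0) / ((0:ℝ) - 1) = -α₁ := by ring
      rw [h3] at h2
      exact h2
    refine h1.congr' ?_
    filter_upwards [eventually_gt_atTop (max c 0)] with ρ hρ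
    have hρ0 : ρ ≠ 0 := by
      have := lt_of_le_of_lt (le_max_right c 0) hρ; linarith
    have hcρ : c - ρ ≠ 0 := by
      have := lt_of_le_of_lt (le_max_left c 0) hρ; intro h; linarith
    rw [hfun]
    field_simp
  -- ρ ^ h(ρ) → 0
  have hpow : Tendsto (fun ρ : ℝ => ρ ^ hfun α₁ α₂ c ρ) atTop (nhds 0) := by
    have hmul : Tendsto (fun ρ : ℝ => Real.log ρ * hfun α₁ α₂ c ρ) atTop atBot :=
      Real.tendsto_log_atTop.atTop_mul_neg (by linarith) hh
    have := Real.tendsto_exp_atBot.comp hmul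
    refine this.congr' ?_
    filter_upwards [eventually_gt_atTop 0] with ρ hρ
    simp [Real.rpow_def_of_pos hρ]
  -- denominator factor D → 1
  have hD : Tendsto (fun ρ : ℝ => (1 : ℂ) + (lam : ℂ) * ((ρ ^ hfun α₁ α₂ c ρ : ℝ) : ℂ) *
      Complex.exp ((Real.pi : ℂ) * (hfun α₁ α₂ c ρ : ℂ) * Complex.I)) atTop (nhds 1) := by
    have hcast : Tendsto (fun ρ : ℝ => ((ρ ^ hfun α₁ α₂ c ρ : ℝ) : ℂ)) atTop (nhds 0) := by
      have := (Complex.continuous_ofReal.tendsto (0 : ℝ)).comp hpow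
      simpa [Function.comp_def] using this
    have hexp : Tendsto (fun ρ : ℝ =>
        Complex.exp ((Real.pi : ℂ) * (hfun α₁ α₂ c ρ : ℂ) * Complex.I)) atTop
        (nhds (Complex.exp ((Real.pi : ℂ) * (-α₁ : ℂ) * Complex.I))) := by
      have harg : Tendsto (fun ρ : ℝ => (Real.pi : ℂ) * (hfun α₁ α₂ c ρ : ℂ) * Complex.I)
          atTop (nhds ((Real.pi : ℂ) * (-α₁ : ℂ) * Complex.I)) := by
        have := ((Complex.continuous_ofReal.tendsto (-α₁)).comp hh)
        have h2 := (this.const_mul (Real.pi : ℂ)).mul_const Complex.I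
        simpa using h2
      exact (Complex.continuous_exp.tendsto _).comp harg
    have hmul2 := ((hcast.const_mul (lam : ℂ)).mul hexp).const_add (1 : ℂ)
    simpa using hmul2
  -- numerator factor N → 1
  have hN : Tendsto (fun ρ : ℝ => (1 : ℂ) + (lam : ℂ) *
      Complex.exp (-((Real.pi : ℂ) * (α₁ : ℂ) * Complex.I)) * ((ρ ^ (-α₁) : ℝ) : ℂ))
      atTop (nhds 1) := by
    have hr : Tendsto (fun ρ : ℝ => ((ρ ^ (-α₁) : ℝ) : ℂ)) atTop (nhds 0) := by
      have := (Complex.continuous_ofReal.tendsto (0 : ℝ)).comp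
        (tendsto_rpow_neg_atTop h0)
      simpa [Function.comp_def] using this
    have hmul2 := (hr.const_mul ((lam : ℂ) *
      Complex.exp (-((Real.pi : ℂ) * (α₁ : ℂ) * Complex.I)))).const_add (1 : ℂ)
    simp only [mul_zero, add_zero, mul_assoc] at hmul2 ⊢
    simpa using hmul2
  have hmain := hN.div hD (one_ne_zero)
  rw [show ((1 : ℂ) / 1) = 1 by norm_num] at hmain
  refine hmain.congr' ?_
  filter_upwards [eventually_gt_atTop (0 : ℝ)] with ρ hρ
  have hρ0 : (ρ : ℂ) ≠ 0 := by exact_mod_cast ne_of_gt hρ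
  have hsplit : ρ ^ (1 - α₁) = ρ * ρ ^ (-α₁) := by
    rw [show (1 - α₁) = 1 + (-α₁) by ring, Real.rpow_add hρ, Real.rpow_one]
  have : ((ρ : ℂ) + (lam : ℂ) * Complex.exp (-((Real.pi : ℂ) * (α₁ : ℂ) * Complex.I)) *
      ((ρ ^ (1 - α₁) : ℝ) : ℂ)) = (ρ : ℂ) * ((1 : ℂ) + (lam : ℂ) *
      Complex.exp (-((Real.pi : ℂ) * (α₁ : ℂ) * Complex.I)) * ((ρ ^ (-α₁) : ℝ) : ℂ)) := by
    rw [hsplit]; push_cast; ring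
  rw [this, mul_div_mul_left _ _ hρ0]
  rfl
end

section
/- Asymptotic behaviour at the origin: as ρ → 0⁺, the boundary integrand is asymptotically equivalent to −1/(ρ + λ e^{−iπ α₂} ρ^{1−α₂}); precisely, lim_{ρ→0⁺} (ρ + λ e^{−iπ α₂} ρ^{1−α₂}) / (ρ(1 + λ ρ^{h(ρ)} e^{iπ h(ρ)})) = 1. -/
open MeasureTheory Filter Set

/-- Asymptotic behaviour at the origin: the boundary integrand is asymptotically equivalent to
`-1/(ρ + λ e^{-iπ α₂} ρ^{1-α₂})` as `ρ → 0⁺`; precisely,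
`(ρ + λ e^{-iπ α₂} ρ^{1-α₂}) / (ρ(1 + λ ρ^{h(ρ)} e^{iπ h(ρ)})) → 1`. -/
theorem boundary_integrand_asymptotics_origin
    (α₁ α₂ c lam t : ℝ) (h0 : 0 < α₁) (h12 : α₁ < α₂) (h21 : α₂ < 1)
    (hc : 0 < c) (hlam : 0 < lam) (ht : 0 < t) :
    Tendsto (fun ρ : ℝ =>
        ((ρ : ℂ) + (lam : ℂ) * Complex.exp (-((Real.pi : ℂ) * (α₂ : ℂ) * Complex.I)) *
            ((ρ ^ (1 - α₂) : ℝ) : ℂ)) /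
        ((ρ : ℂ) * (1 + (lam : ℂ) * ((ρ ^ hfun α₁ α₂ c ρ : ℝ) : ℂ) *
          Complex.exp ((Real.pi : ℂ) * (hfun α₁ α₂ c ρ : ℂ) * Complex.I))))
      (nhdsWithin 0 (Set.Ioi 0)) (nhds 1) := by
  have hα₂ : (0:ℝ) < α₂ := h0.trans h12
  set L : ℂ := (lam : ℂ) * Complex.exp (-((Real.pi : ℂ) * (α₂ : ℂ) * Complex.I)) with hLdef
  have hL : L ≠ 0 := mul_ne_zero (by exact_mod_cast hlam.ne') (Complex.exp_ne_zero _)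
  -- Step A : ρ^α₂ → 0
  have hAr : Tendsto (fun ρ : ℝ => ρ ^ α₂) (nhdsWithin 0 (Set.Ioi 0)) (nhds 0) := by
    have h1 : ContinuousAt (fun ρ : ℝ => ρ ^ α₂) 0 :=
      Real.continuousAt_rpow_const 0 α₂ (Or.inr hα₂.le)
    have h2 : Tendsto (fun ρ : ℝ => ρ ^ α₂) (nhds 0) (nhds 0) := by
      simpa [Real.zero_rpow hα₂.ne'] using h1.tendsto
    exact h2.mono_left nhdsWithin_le_nhds
  have hA : Tendsto (fun ρ : ℝ => ((ρ ^ α₂ : ℝ) : ℂ)) (nhdsWithin 0 (Set.Ioi 0)) (nhds 0) := by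
    simpa [Function.comp_def] using (Complex.continuous_ofReal.tendsto (0:ℝ)).comp hAr
  -- Step B : ρ^(h(ρ)+α₂) → 1
  have hB0 : Tendsto (fun ρ : ℝ => (hfun α₁ α₂ c ρ + α₂) * Real.log ρ)
      (nhdsWithin 0 (Set.Ioi 0)) (nhds 0) := by
    have hmul : Tendsto (fun ρ : ℝ => ((α₁ - α₂) / (c - ρ)) * (Real.log ρ * ρ))
        (nhdsWithin 0 (Set.Ioi 0)) (nhds 0) := by
      have h1 : Tendsto (fun ρ : ℝ => (α₁ - α₂) / (c - ρ)) (nhdsWithin 0 (Set.Ioi 0))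
          (nhds ((α₁ - α₂) / c)) := by
        apply Tendsto.mono_left _ nhdsWithin_le_nhds
        have : ContinuousAt (fun ρ : ℝ => (α₁ - α₂) / (c - ρ)) 0 :=
          ContinuousAt.div (by fun_prop) (by fun_prop) (by simpa using hc.ne')
        simpa using this.tendsto
      have h2 : Tendsto (fun ρ : ℝ => Real.log ρ * ρ) (nhdsWithin 0 (Set.Ioi 0)) (nhds 0) := by
        have := tendsto_log_mul_rpow_nhdsGT_zero (r := 1) one_pos
        simpa [Real.rpow_one] using this
      simpa using h1.mul h2
    apply hmul.congr'
    filter_upwards [Ioo_mem_nhdsGT_of_mem (by constructor <;> [rfl; exact hc] : (0:ℝ) ∈ Set.Ico 0 c)]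
      with ρ hρ
    have hcρ : c - ρ ≠ 0 := sub_ne_zero.mpr (ne_of_gt hρ.2)
    unfold hfun
    field_simp
    ring
  have hBr : Tendsto (fun ρ : ℝ => ρ ^ (hfun α₁ α₂ c ρ + α₂)) (nhdsWithin 0 (Set.Ioi 0))
      (nhds 1) := by
    have := (Real.continuous_exp.tendsto 0).comp hB0
    rw [Real.exp_zero] at this
    apply this.congr'
    filter_upwards [self_mem_nhdsWithin] with ρ (hρ : (0:ℝ) < ρ)
    rw [Real.rpow_def_of_pos hρ, Function.comp_apply, mul_comm]
  have hB : Tendsto (fun ρ : ℝ => ((ρ ^ (hfun α₁ α₂ c ρ + α₂) : ℝ) : ℂ))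
      (nhdsWithin 0 (Set.Ioi 0)) (nhds 1) := by
    simpa [Function.comp_def] using (Complex.continuous_ofReal.tendsto (1:ℝ)).comp hBr
  -- Step C : exp(iπ h(ρ)) → exp(-iπα₂)
  have hCr : Tendsto (fun ρ : ℝ => hfun α₁ α₂ c ρ) (nhdsWithin 0 (Set.Ioi 0)) (nhds (-α₂)) := by
    apply Tendsto.mono_left _ nhdsWithin_le_nhds
    have hcont : ContinuousAt (fun ρ : ℝ => hfun α₁ α₂ c ρ) 0 := by
      unfold hfun
      exact ContinuousAt.div (by fun_prop) (by fun_prop) (by simpa using hc.ne')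
    have : hfun α₁ α₂ c 0 = -α₂ := by unfold hfun; rw [mul_zero, zero_sub, sub_zero, neg_div, mul_div_cancel_right₀ _ hc.ne']
    simpa [this] using hcont.tendsto
  have hC : Tendsto (fun ρ : ℝ => Complex.exp ((Real.pi : ℂ) * (hfun α₁ α₂ c ρ : ℂ) * Complex.I))
      (nhdsWithin 0 (Set.Ioi 0)) (nhds (Complex.exp (-((Real.pi : ℂ) * (α₂ : ℂ) * Complex.I)))) := by
    have h1 : Tendsto (fun ρ : ℝ => (Real.pi : ℂ) * (hfun α₁ α₂ c ρ : ℂ) * Complex.I)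
        (nhdsWithin 0 (Set.Ioi 0)) (nhds (-((Real.pi : ℂ) * (α₂ : ℂ) * Complex.I))) := by
      have h2 : Tendsto (fun ρ : ℝ => ((hfun α₁ α₂ c ρ : ℝ) : ℂ)) (nhdsWithin 0 (Set.Ioi 0))
          (nhds ((-α₂ : ℝ) : ℂ)) := (Complex.continuous_ofReal.tendsto _).comp hCr
      have := (h2.const_mul (Real.pi : ℂ)).mul_const Complex.I
      convert this using 2
      push_cast
      ring
    exact (Complex.continuous_exp.tendsto _).comp h1
  -- numerator and denominator after factoring out ρ^(1-α₂)
  have tN : Tendsto (fun ρ : ℝ => ((ρ ^ α₂ : ℝ) : ℂ) + L) (nhdsWithin 0 (Set.Ioi 0)) (nhds L) := by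
    simpa using hA.add (tendsto_const_nhds (x := L))
  have tD : Tendsto (fun ρ : ℝ => ((ρ ^ α₂ : ℝ) : ℂ) +
      (lam : ℂ) * ((ρ ^ (hfun α₁ α₂ c ρ + α₂) : ℝ) : ℂ) *
        Complex.exp ((Real.pi : ℂ) * (hfun α₁ α₂ c ρ : ℂ) * Complex.I))
      (nhdsWithin 0 (Set.Ioi 0)) (nhds L) := by
    have := hA.add ((((tendsto_const_nhds (x := (lam:ℂ))).mul hB).mul hC))
    simpa [hLdef, mul_comm, mul_assoc, mul_left_comm] using this
  have key := tN.div tD hL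
  rw [div_self hL] at key
  apply key.congr'
  filter_upwards [self_mem_nhdsWithin] with ρ (hρ : (0:ℝ) < ρ)
  have hpow : ((ρ ^ (1 - α₂) : ℝ) : ℂ) ≠ 0 := by
    exact_mod_cast (Real.rpow_pos_of_pos hρ _).ne'
  have e1 : (ρ : ℂ) = ((ρ ^ (1 - α₂) : ℝ) : ℂ) * ((ρ ^ α₂ : ℝ) : ℂ) := by
    rw [← Complex.ofReal_mul, ← Real.rpow_add hρ]
    norm_num
  have e2 : ((ρ ^ α₂ : ℝ) : ℂ) * ((ρ ^ hfun α₁ α₂ c ρ : ℝ) : ℂ) =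
      ((ρ ^ (hfun α₁ α₂ c ρ + α₂) : ℝ) : ℂ) := by
    rw [← Complex.ofReal_mul, ← Real.rpow_add hρ, add_comm]
  have : ((ρ : ℂ) + L * ((ρ ^ (1 - α₂) : ℝ) : ℂ)) /
      ((ρ : ℂ) * (1 + (lam : ℂ) * ((ρ ^ hfun α₁ α₂ c ρ : ℝ) : ℂ) *
        Complex.exp ((Real.pi : ℂ) * (hfun α₁ α₂ c ρ : ℂ) * Complex.I))) =
      (((ρ ^ (1 - α₂) : ℝ) : ℂ) * (((ρ ^ α₂ : ℝ) : ℂ) + L)) /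
      (((ρ ^ (1 - α₂) : ℝ) : ℂ) * (((ρ ^ α₂ : ℝ) : ℂ) +
        (lam : ℂ) * ((ρ ^ (hfun α₁ α₂ c ρ + α₂) : ℝ) : ℂ) *
          Complex.exp ((Real.pi : ℂ) * (hfun α₁ α₂ c ρ : ℂ) * Complex.I))) := by
    congr 1
    · rw [e1]; ring
    · rw [e1, ← e2]; ring
  simp only [Pi.div_apply]
  rw [this, mul_div_mul_left _ _ hpow]
end

section
/- Assume in addition c > 1 and that 1 + λ ρ^{h(ρ)} e^{iπ h(ρ)} ≠ 0 for every ρ ∈ (0,∞) ∖ {c}. Then the complex-valued function ρ ↦ e^{−ρ t} / (ρ(1 + λ ρ^{h(ρ)} e^{iπ h(ρ)})) is Lebesgue integrable on (0,∞). -/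
open MeasureTheory Filter Set

/-! ### Auxiliary definitions and lemmas -/

/-- The oscillating part `λ ρ^{h(ρ)} e^{iπ h(ρ)}` of the denominator. -/
noncomputable def myZ (α₁ α₂ c lam : ℝ) (ρ : ℝ) : ℂ :=
  (lam : ℂ) * ((ρ ^ hfun α₁ α₂ c ρ : ℝ) : ℂ) *
    Complex.exp ((Real.pi : ℂ) * (hfun α₁ α₂ c ρ : ℂ) * Complex.I)

/-- The boundary integrand. -/
noncomputable def myF (α₁ α₂ c lam t : ℝ) (ρ : ℝ) : ℂ :=
  ((Real.exp (-ρ * t) : ℝ) : ℂ) / ((ρ : ℂ) * (1 + myZ α₁ α₂ c lam ρ))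

lemma myZ_abs (α₁ α₂ c : ℝ) {lam : ℝ} (hlam : 0 < lam) {ρ : ℝ} (hρ : 0 < ρ) :
    ‖myZ α₁ α₂ c lam ρ‖ = lam * ρ ^ hfun α₁ α₂ c ρ := by
  unfold myZ
  rw [norm_mul, norm_mul, Complex.norm_exp]
  simp [abs_of_pos hlam, abs_of_pos (Real.rpow_pos_of_pos hρ _),
    Complex.mul_re, Complex.mul_im]

lemma myLB1 (z : ℂ) : ‖z‖ - 1 ≤ ‖1 + z‖ := by
  have := norm_add_le (1 + z) (-1)
  simp at this
  linarith

lemma myLB2 (z : ℂ) : 1 - ‖z‖ ≤ ‖1 + z‖ := by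
  have := norm_add_le (1 + z) (-z)
  simp at this
  linarith

lemma myF_norm (α₁ α₂ c lam t : ℝ) {ρ : ℝ} (hρ : 0 < ρ) :
    ‖myF α₁ α₂ c lam t ρ‖
      = Real.exp (-ρ * t) / (ρ * ‖1 + myZ α₁ α₂ c lam ρ‖) := by
  unfold myF
  rw [norm_div, norm_mul, Complex.norm_of_nonneg hρ.le,
    Complex.norm_of_nonneg (Real.exp_pos _).le]

lemma myF_le (α₁ α₂ c lam t : ℝ) {ρ m₀ : ℝ} (hρ : 0 < ρ) (hm₀ : 0 < m₀)
    (hm : m₀ ≤ ‖1 + myZ α₁ α₂ c lam ρ‖) :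
    ‖myF α₁ α₂ c lam t ρ‖ ≤ Real.exp (-ρ * t) / (ρ * m₀) := by
  rw [myF_norm _ _ _ _ _ hρ]
  have h1 : 0 < ρ * m₀ := mul_pos hρ hm₀
  apply div_le_div_of_nonneg_left (Real.exp_pos _).le h1
  exact mul_le_mul_of_nonneg_left hm hρ.le

lemma myH0 {α₁ α₂ c : ℝ} (h12 : α₁ < α₂) {ρ : ℝ} (h1 : 0 < ρ) (h2 : ρ < c) :
    hfun α₁ α₂ c ρ ≤ -α₂ := by
  unfold hfun
  rw [div_le_iff₀ (by linarith)]
  nlinarith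

lemma myHtail {α₁ α₂ c : ℝ} (h0 : 0 < α₁) (h12 : α₁ < α₂) {ρ : ℝ} (hc : 0 < c)
    (hρ : c + 2*c*(α₂-α₁)/α₁ ≤ ρ) : hfun α₁ α₂ c ρ ≤ -α₁/2 := by
  have hpos : 0 < 2*c*(α₂-α₁)/α₁ := div_pos (by nlinarith) h0
  have hcρ : c < ρ := by linarith
  have key := mul_le_mul_of_nonneg_right hρ h0.le
  rw [add_mul, div_mul_cancel₀ _ (ne_of_gt h0)] at key
  unfold hfun
  rw [div_le_iff_of_neg (by linarith)]
  nlinarith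

lemma myHleft {α₁ α₂ c : ℝ} (h0 : 0 < α₁) (h12 : α₁ < α₂) {ρ η : ℝ} (hc : 0 < c) (hη : 0 < η)
    (h1 : c - η ≤ ρ) (h2 : ρ < c) : hfun α₁ α₂ c ρ ≤ -(c*(α₂-α₁))/η := by
  have hd : 0 < c - ρ := by linarith
  unfold hfun
  rw [div_le_div_iff₀ hd hη]
  have hnum : α₁*ρ - α₂*c ≤ -(c*(α₂-α₁)) := by nlinarith
  nlinarith [mul_le_mul_of_nonneg_right hnum hη.le,
    mul_le_mul_of_nonneg_left (show c - ρ ≤ η by linarith) (show (0:ℝ) ≤ c*(α₂-α₁) by nlinarith)]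

lemma myHright {α₁ α₂ c : ℝ} (h0 : 0 < α₁) (h12 : α₁ < α₂) {ρ η : ℝ} (hc : 0 < c) (hη : 0 < η)
    (hη0 : η ≤ c*(α₂-α₁)/(2*α₁)) (h1 : c < ρ) (h2 : ρ ≤ c + η) :
    c*(α₂-α₁)/2/η ≤ hfun α₁ α₂ c ρ := by
  have hd : 0 < ρ - c := by linarith
  have hrw : hfun α₁ α₂ c ρ = (α₂*c - α₁*ρ)/(ρ-c) := by
    unfold hfun
    rw [← neg_div_neg_eq]
    ring_nf
  rw [hrw, div_le_div_iff₀ hη hd]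
  have hcancel : α₁ * (c*(α₂-α₁)/(2*α₁)) = c*(α₂-α₁)/2 := by field_simp
  have hαη : α₁ * η ≤ c*(α₂-α₁)/2 := by
    calc α₁ * η ≤ α₁ * (c*(α₂-α₁)/(2*α₁)) := by nlinarith
    _ = c*(α₂-α₁)/2 := hcancel
  have hnum : c*(α₂-α₁)/2 ≤ α₂*c - α₁*ρ := by nlinarith
  nlinarith [mul_le_mul_of_nonneg_right hnum hη.le,
    mul_le_mul_of_nonneg_left (show ρ - c ≤ η by linarith) (show (0:ℝ) ≤ c*(α₂-α₁)/2 by nlinarith)]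

lemma myCont (α₁ α₂ c lam t : ℝ)
    (hnz : ∀ ρ : ℝ, 0 < ρ → ρ ≠ c → (1 : ℂ) + myZ α₁ α₂ c lam ρ ≠ 0) :
    ContinuousOn (myF α₁ α₂ c lam t) (Set.Ioi 0 \ {c}) := by
  have hH : ContinuousOn (hfun α₁ α₂ c) (Set.Ioi 0 \ {c}) := by
    unfold hfun
    apply ContinuousOn.div
    · exact ((continuous_const.mul continuous_id).sub continuous_const).continuousOn
    · exact (continuous_const.sub continuous_id).continuousOn
    · intro x hx
      exact sub_ne_zero.2 fun e => hx.2 e.symm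
  have hP : ContinuousOn (fun ρ : ℝ => ρ ^ hfun α₁ α₂ c ρ) (Set.Ioi 0 \ {c}) :=
    ContinuousOn.rpow continuousOn_id hH fun x hx => Or.inl (ne_of_gt hx.1)
  have hZ : ContinuousOn (myZ α₁ α₂ c lam) (Set.Ioi 0 \ {c}) := by
    unfold myZ
    exact (continuousOn_const.mul (Complex.continuous_ofReal.comp_continuousOn hP)).mul
      (Complex.continuous_exp.comp_continuousOn
        ((continuousOn_const.mul (Complex.continuous_ofReal.comp_continuousOn hH)).mul
          continuousOn_const))
  unfold myF
  apply ContinuousOn.div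
  · exact (Complex.continuous_ofReal.comp
      (Real.continuous_exp.comp (continuous_id.neg.mul continuous_const))).continuousOn
  · exact (Complex.continuous_ofReal.continuousOn).mul (continuousOn_const.add hZ)
  · intro x hx
    exact mul_ne_zero (by exact_mod_cast ne_of_gt hx.1) (hnz x hx.1 hx.2)


lemma myExpLe {ρ t : ℝ} (hρ : 0 ≤ ρ) (ht : 0 ≤ t) : Real.exp (-ρ * t) ≤ 1 := by
  have h1 : -ρ * t ≤ 0 := by nlinarith
  calc Real.exp (-ρ * t) ≤ Real.exp 0 := Real.exp_le_exp.2 h1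
    _ = 1 := Real.exp_zero


lemma myBound1 {α₁ α₂ c lam t : ℝ} (h0 : 0 < α₁) (h12 : α₁ < α₂) (hc1 : 1 < c)
    (hlam : 0 < lam) (ht : 0 < t) {δ : ℝ} (hδ1 : δ ≤ 1) (hδ2 : δ ≤ (lam/2) ^ (1/α₂ : ℝ)) :
    ∀ x ∈ Set.Ioc 0 δ, ‖myF α₁ α₂ c lam t x‖ ≤ (2/lam) * x ^ (α₂-1 : ℝ) := by
  have hα2 : 0 < α₂ := h0.trans h12
  intro ρ hx
  obtain ⟨hρ, hρδ⟩ := hx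
  have hρ1 : ρ ≤ 1 := le_trans hρδ hδ1
  have hρc : ρ < c := by linarith
  have hA : 0 < ρ ^ (α₂ : ℝ) := Real.rpow_pos_of_pos hρ _
  have hAle : ρ ^ (α₂ : ℝ) ≤ lam/2 := by
    have h1 : ρ ≤ (lam/2) ^ (1/α₂ : ℝ) := le_trans hρδ hδ2
    have h2 : ρ ^ (α₂:ℝ) ≤ ((lam/2) ^ (1/α₂ : ℝ)) ^ (α₂:ℝ) := Real.rpow_le_rpow hρ.le h1 hα2.le
    rwa [← Real.rpow_mul (by linarith : (0:ℝ) ≤ lam/2), one_div,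
      inv_mul_cancel₀ (ne_of_gt hα2), Real.rpow_one] at h2
  have hq : ρ ^ (-α₂ : ℝ) = (ρ ^ (α₂:ℝ))⁻¹ := Real.rpow_neg hρ.le _
  have hL2 : 2 ≤ lam * ρ ^ (-α₂ : ℝ) := by
    rw [hq, ← div_eq_mul_inv, le_div_iff₀ hA]; linarith
  have hph : ρ ^ (-α₂:ℝ) ≤ ρ ^ hfun α₁ α₂ c ρ :=
    Real.rpow_le_rpow_of_exponent_ge hρ hρ1 (myH0 h12 hρ hρc)
  have t2 : lam * ρ ^ (-α₂:ℝ) ≤ lam * ρ ^ hfun α₁ α₂ c ρ := mul_le_mul_of_nonneg_left hph hlam.le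
  have hm : lam * ρ ^ (-α₂:ℝ) / 2 ≤ ‖1 + myZ α₁ α₂ c lam ρ‖ := by
    have t1 := myLB1 (myZ α₁ α₂ c lam ρ)
    rw [myZ_abs α₁ α₂ c hlam hρ] at t1
    linarith
  have hm₀ : 0 < lam * ρ ^ (-α₂:ℝ) / 2 := by
    have := Real.rpow_pos_of_pos hρ (-α₂ : ℝ); positivity
  have hbb := myF_le α₁ α₂ c lam t hρ hm₀ hm
  have hA' : ρ ^ (α₂:ℝ) ≠ 0 := ne_of_gt hA
  have hρ' : ρ ≠ 0 := ne_of_gt hρ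
  have hlam' : lam ≠ 0 := ne_of_gt hlam
  calc ‖myF α₁ α₂ c lam t ρ‖ ≤ Real.exp (-ρ*t) / (ρ * (lam * ρ ^ (-α₂:ℝ) / 2)) := hbb
    _ ≤ 1 / (ρ * (lam * ρ ^ (-α₂:ℝ) / 2)) := by
        gcongr
        exact myExpLe hρ.le ht.le
    _ = (2/lam) * ρ ^ (α₂-1 : ℝ) := by
        rw [Real.rpow_sub hρ, Real.rpow_one, hq]
        field_simp

lemma myBound3 {α₁ α₂ c lam t : ℝ} (h0 : 0 < α₁) (h12 : α₁ < α₂) (hc1 : 1 < c)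
    (hlam : 0 < lam) (ht : 0 < t) {ηL ML : ℝ} (hηL0 : 0 < ηL) (hML1 : 1 ≤ ML)
    (hML2 : Real.log (2*lam) / Real.log ((1+c)/2) ≤ ML) (hηL2 : ηL ≤ c*(α₂-α₁)/ML)
    (hηL1 : ηL ≤ (c-1)/2) :
    ∀ x ∈ Set.Ico (c-ηL) c, ‖myF α₁ α₂ c lam t x‖ ≤ 2 := by
  have hc : 0 < c := by linarith
  have hML0 : 0 < ML := by linarith
  set b : ℝ := (1+c)/2 with hbdef
  have hb1 : 1 < b := by rw [hbdef]; linarith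
  have hb0 : 0 < b := by linarith
  have hηLb : b ≤ c - ηL := by rw [hbdef]; linarith
  intro ρ hx
  have hρb : b ≤ ρ := le_trans hηLb hx.1
  have hρ0 : 0 < ρ := by linarith
  have hρ1 : 1 ≤ ρ := by linarith
  have hhle : hfun α₁ α₂ c ρ ≤ -(c*(α₂-α₁))/ηL :=
    myHleft h0 h12 hc hηL0 (by linarith [hx.1]) hx.2
  have hKM : ML ≤ c*(α₂-α₁)/ηL := by
    rw [le_div_iff₀ hηL0]
    have h2 : ηL * ML ≤ c*(α₂-α₁) := by
      have := (le_div_iff₀ hML0).1 hηL2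
      linarith
    nlinarith
  have hhle2 : hfun α₁ α₂ c ρ ≤ -ML := by
    rw [neg_div] at hhle; linarith
  have hp1 : ρ ^ hfun α₁ α₂ c ρ ≤ ρ ^ (-ML : ℝ) :=
    Real.rpow_le_rpow_of_exponent_le hρ1 hhle2
  have hp2 : ρ ^ (-ML:ℝ) ≤ b ^ (-ML:ℝ) := Real.rpow_le_rpow_of_nonpos hb0 hρb (by linarith)
  have hb3 : b ^ (-ML : ℝ) ≤ (2*lam)⁻¹ := by
    rw [Real.rpow_def_of_pos hb0]
    have hlogb : 0 < Real.log b := Real.log_pos hb1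
    have hlog2 : Real.log (2*lam) ≤ ML * Real.log b := (div_le_iff₀ hlogb).1 hML2
    calc Real.exp (Real.log b * -ML) = Real.exp (-(ML * Real.log b)) := by ring_nf
      _ ≤ Real.exp (-(Real.log (2*lam))) := Real.exp_le_exp.2 (by linarith)
      _ = (2*lam)⁻¹ := by rw [Real.exp_neg, Real.exp_log (by linarith)]
  have hzp : lam * ρ ^ hfun α₁ α₂ c ρ ≤ 1/2 := by
    have h3 : lam * ρ ^ hfun α₁ α₂ c ρ ≤ lam * (2*lam)⁻¹ :=
      mul_le_mul_of_nonneg_left (le_trans hp1 (le_trans hp2 hb3)) hlam.le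
    have h4 : lam * (2*lam)⁻¹ = 1/2 := by field_simp
    linarith
  have hm : (1:ℝ)/2 ≤ ‖1 + myZ α₁ α₂ c lam ρ‖ := by
    have t1 := myLB2 (myZ α₁ α₂ c lam ρ)
    rw [myZ_abs α₁ α₂ c hlam hρ0] at t1
    linarith
  calc ‖myF α₁ α₂ c lam t ρ‖ ≤ Real.exp (-ρ*t) / (ρ * (1/2)) :=
      myF_le α₁ α₂ c lam t hρ0 (by norm_num) hm
    _ ≤ 1 / (1*(1/2)) :=
      div_le_div₀ (by norm_num) (myExpLe hρ0.le ht.le) (by norm_num) (by nlinarith)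
    _ = 2 := by norm_num

lemma myBound4 {α₁ α₂ c lam t : ℝ} (h0 : 0 < α₁) (h12 : α₁ < α₂) (hc1 : 1 < c)
    (hlam : 0 < lam) (ht : 0 < t) {ηR MR : ℝ} (hηR0 : 0 < ηR) (hMR1 : 1 ≤ MR)
    (hMR2 : Real.log (2/lam) / Real.log c ≤ MR) (hηR1 : ηR ≤ c*(α₂-α₁)/(2*α₁))
    (hηR2 : ηR ≤ c*(α₂-α₁)/2/MR) :
    ∀ x ∈ Set.Ioc c (c+ηR), ‖myF α₁ α₂ c lam t x‖ ≤ 1 := by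
  have hc : 0 < c := by linarith
  have hMR0 : 0 < MR := by linarith
  intro ρ hx
  have hρ0 : 0 < ρ := lt_trans hc hx.1
  have hρ1 : 1 ≤ ρ := le_of_lt (lt_trans hc1 hx.1)
  have hhge : c*(α₂-α₁)/2/ηR ≤ hfun α₁ α₂ c ρ :=
    myHright h0 h12 hc hηR0 hηR1 hx.1 hx.2
  have hKM : MR ≤ c*(α₂-α₁)/2/ηR := by
    rw [le_div_iff₀ hηR0]
    have h2 : ηR * MR ≤ c*(α₂-α₁)/2 := by
      have := (le_div_iff₀ hMR0).1 hηR2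
      linarith
    nlinarith
  have hhge2 : MR ≤ hfun α₁ α₂ c ρ := le_trans hKM hhge
  have hp1 : ρ ^ (MR:ℝ) ≤ ρ ^ hfun α₁ α₂ c ρ :=
    Real.rpow_le_rpow_of_exponent_le hρ1 hhge2
  have hp2 : c ^ (MR:ℝ) ≤ ρ ^ (MR:ℝ) := Real.rpow_le_rpow hc.le hx.1.le (by linarith)
  have hc3 : 2/lam ≤ c ^ (MR : ℝ) := by
    rw [Real.rpow_def_of_pos hc]
    have hlogc : 0 < Real.log c := Real.log_pos hc1
    have hlog2 : Real.log (2/lam) ≤ MR * Real.log c := (div_le_iff₀ hlogc).1 hMR2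
    calc (2:ℝ)/lam = Real.exp (Real.log (2/lam)) := by
          rw [Real.exp_log (by positivity)]
      _ ≤ Real.exp (Real.log c * MR) := Real.exp_le_exp.2 (by linarith)
  have hzp : 2 ≤ lam * ρ ^ hfun α₁ α₂ c ρ := by
    have h3 : lam * (2/lam) ≤ lam * ρ ^ hfun α₁ α₂ c ρ :=
      mul_le_mul_of_nonneg_left (le_trans hc3 (le_trans hp2 hp1)) hlam.le
    have h4 : lam * (2/lam) = 2 := by field_simp
    linarith
  have hm : (1:ℝ) ≤ ‖1 + myZ α₁ α₂ c lam ρ‖ := by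
    have t1 := myLB1 (myZ α₁ α₂ c lam ρ)
    rw [myZ_abs α₁ α₂ c hlam hρ0] at t1
    linarith
  calc ‖myF α₁ α₂ c lam t ρ‖ ≤ Real.exp (-ρ*t) / (ρ * 1) :=
      myF_le α₁ α₂ c lam t hρ0 one_pos hm
    _ ≤ 1 / (1*1) :=
      div_le_div₀ (by norm_num) (myExpLe hρ0.le ht.le) (by norm_num) (by nlinarith)
    _ = 1 := by norm_num

lemma myBound6 {α₁ α₂ c lam t : ℝ} (h0 : 0 < α₁) (h12 : α₁ < α₂) (hc1 : 1 < c)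
    (hlam : 0 < lam) (ht : 0 < t) {Rm : ℝ}
    (hRmA : c + 2*c*(α₂-α₁)/α₁ ≤ Rm) (hRmB : (2*lam) ^ (2/α₁ : ℝ) ≤ Rm) (hRm1 : 1 ≤ Rm) :
    ∀ x ∈ Set.Ioi Rm, ‖myF α₁ α₂ c lam t x‖ ≤ 2 * Real.exp (-t*x) := by
  have hc : 0 < c := by linarith
  intro ρ hx
  rw [Set.mem_Ioi] at hx
  have hρ1 : 1 ≤ ρ := by linarith
  have hρ0 : 0 < ρ := by linarith
  have hρR : c + 2*c*(α₂-α₁)/α₁ ≤ ρ := by linarith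
  have hh := myHtail h0 h12 hc hρR
  have hp1 : ρ ^ hfun α₁ α₂ c ρ ≤ ρ ^ (-α₁/2 : ℝ) :=
    Real.rpow_le_rpow_of_exponent_le hρ1 hh
  have hneg : ρ ^ (-α₁/2 : ℝ) = (ρ ^ (α₁/2:ℝ))⁻¹ := by
    rw [show (-α₁/2:ℝ) = -(α₁/2) by ring, Real.rpow_neg hρ0.le]
  have hρ2 : (2*lam) ^ (2/α₁:ℝ) ≤ ρ := by linarith
  have hA : (2*lam) ≤ ρ ^ (α₁/2:ℝ) := by
    have h5 := Real.rpow_le_rpow (Real.rpow_nonneg (by linarith) _) hρ2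
      (by positivity : (0:ℝ) ≤ α₁/2)
    rw [← Real.rpow_mul (by linarith : (0:ℝ) ≤ 2*lam),
      show (2/α₁ * (α₁/2) : ℝ) = 1 by field_simp, Real.rpow_one] at h5
    exact h5
  have hinv : (ρ ^ (α₁/2:ℝ))⁻¹ ≤ (2*lam)⁻¹ :=
    inv_anti₀ (by linarith) hA
  have hzp : lam * ρ ^ hfun α₁ α₂ c ρ ≤ 1/2 := by
    have h3 : lam * ρ ^ hfun α₁ α₂ c ρ ≤ lam * (2*lam)⁻¹ := by
      apply mul_le_mul_of_nonneg_left _ hlam.le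
      rw [hneg] at hp1
      exact le_trans hp1 hinv
    have h4 : lam * (2*lam)⁻¹ = 1/2 := by field_simp
    linarith
  have hm : (1:ℝ)/2 ≤ ‖1 + myZ α₁ α₂ c lam ρ‖ := by
    have t1 := myLB2 (myZ α₁ α₂ c lam ρ)
    rw [myZ_abs α₁ α₂ c hlam hρ0] at t1
    linarith
  calc ‖myF α₁ α₂ c lam t ρ‖ ≤ Real.exp (-ρ*t) / (ρ * (1/2)) :=
      myF_le α₁ α₂ c lam t hρ0 (by norm_num) hm
    _ ≤ Real.exp (-ρ*t) / (1 * (1/2)) := by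
        apply div_le_div_of_nonneg_left (Real.exp_pos _).le (by norm_num)
        nlinarith
    _ = 2 * Real.exp (-t*ρ) := by rw [show -ρ*t = -t*ρ by ring]; ring

lemma myCover {c δ ηL ηR Rm : ℝ} :
    (Set.Ioi 0 \ {c}) ⊆ (Set.Ioc 0 δ ∪ Set.Icc δ (c-ηL) ∪ Set.Ico (c-ηL) c) ∪
      (Set.Ioc c (c+ηR) ∪ Set.Icc (c+ηR) Rm ∪ Set.Ioi Rm) := by
  intro x hx
  obtain ⟨hx0, hxc⟩ := hx
  rw [Set.mem_Ioi] at hx0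
  have hxc' : x ≠ c := by simpa using hxc
  simp only [Set.mem_union, Set.mem_Ioc, Set.mem_Icc, Set.mem_Ico, Set.mem_Ioi]
  rcases lt_trichotomy x c with hlt | heq | hgt
  · left
    by_cases h1 : x ≤ δ
    · exact Or.inl (Or.inl ⟨hx0, h1⟩)
    · by_cases h2 : x ≤ c - ηL
      · exact Or.inl (Or.inr ⟨le_of_not_ge h1, h2⟩)
      · exact Or.inr ⟨(not_le.1 h2).le, hlt⟩
  · exact absurd heq hxc'
  · right
    by_cases h1 : x ≤ c + ηR
    · exact Or.inl (Or.inl ⟨hgt, h1⟩)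
    · by_cases h2 : x ≤ Rm
      · exact Or.inl (Or.inr ⟨(not_le.1 h1).le, h2⟩)
      · exact Or.inr (not_le.1 h2)

lemma mySubS {c a e : ℝ} (ha : 0 < a) (hec : e < c) : Set.Icc a e ⊆ Set.Ioi 0 \ {c} := by
  intro x hx
  refine ⟨Set.mem_Ioi.2 (lt_of_lt_of_le ha hx.1), fun hmem => ?_⟩
  rw [Set.mem_singleton_iff] at hmem
  subst hmem
  linarith [hx.2]

lemma mySubS' {c a e : ℝ} (hca : c < a) (hc : 0 < c) : Set.Icc a e ⊆ Set.Ioi 0 \ {c} := by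
  intro x hx
  refine ⟨Set.mem_Ioi.2 (by linarith [hx.1]), fun hmem => ?_⟩
  rw [Set.mem_singleton_iff] at hmem
  subst hmem
  linarith [hx.1]

set_option maxHeartbeats 1000000 in
/-- If `c > 1` and the denominator never vanishes on `(0,∞) ∖ {c}`, the complex boundary
integrand `ρ ↦ e^{-ρ t}/(ρ(1 + λ ρ^{h(ρ)} e^{iπ h(ρ)}))` is Lebesgue integrable on `(0,∞)`. -/
theorem boundary_integrand_integrable
    (α₁ α₂ c lam t : ℝ) (h0 : 0 < α₁) (h12 : α₁ < α₂) (h21 : α₂ < 1)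
    (hc : 0 < c) (hlam : 0 < lam) (ht : 0 < t) (hc1 : 1 < c)
    (hnz : ∀ ρ : ℝ, 0 < ρ → ρ ≠ c →
      1 + (lam : ℂ) * ((ρ ^ hfun α₁ α₂ c ρ : ℝ) : ℂ) *
        Complex.exp ((Real.pi : ℂ) * (hfun α₁ α₂ c ρ : ℂ) * Complex.I) ≠ 0) :
    IntegrableOn (fun ρ : ℝ => ((Real.exp (-ρ * t) : ℝ) : ℂ) /
        ((ρ : ℂ) * (1 + (lam : ℂ) * ((ρ ^ hfun α₁ α₂ c ρ : ℝ) : ℂ) *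
          Complex.exp ((Real.pi : ℂ) * (hfun α₁ α₂ c ρ : ℂ) * Complex.I))))
      (Set.Ioi 0) := by
  have hα2 : 0 < α₂ := h0.trans h12
  have hK : 0 < c*(α₂-α₁) := by nlinarith
  suffices hsuf : IntegrableOn (myF α₁ α₂ c lam t) (Set.Ioi 0) by
    exact hsuf
  have hnz' : ∀ ρ : ℝ, 0 < ρ → ρ ≠ c → (1:ℂ) + myZ α₁ α₂ c lam ρ ≠ 0 := hnz
  have hcont := myCont α₁ α₂ c lam t hnz'
  -- the constants
  set δ : ℝ := min 1 ((lam/2) ^ (1/α₂ : ℝ)) with hδdef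
  have hδ0 : 0 < δ := lt_min one_pos (Real.rpow_pos_of_pos (by linarith) _)
  have hδ1 : δ ≤ 1 := min_le_left _ _
  have hδ2 : δ ≤ (lam/2) ^ (1/α₂ : ℝ) := min_le_right _ _
  set ML : ℝ := max 1 (Real.log (2*lam) / Real.log ((1+c)/2)) with hMLdef
  have hML1 : 1 ≤ ML := le_max_left _ _
  have hML0 : 0 < ML := by linarith
  have hML2 : Real.log (2*lam) / Real.log ((1+c)/2) ≤ ML := le_max_right _ _
  set ηL : ℝ := min ((c-1)/2) (c*(α₂-α₁)/ML) with hηLdef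
  have hηL0 : 0 < ηL := lt_min (by linarith) (div_pos hK hML0)
  have hηL1 : ηL ≤ (c-1)/2 := min_le_left _ _
  have hηL2 : ηL ≤ c*(α₂-α₁)/ML := min_le_right _ _
  set MR : ℝ := max 1 (Real.log (2/lam) / Real.log c) with hMRdef
  have hMR1 : 1 ≤ MR := le_max_left _ _
  have hMR0 : 0 < MR := by linarith
  have hMR2 : Real.log (2/lam) / Real.log c ≤ MR := le_max_right _ _
  set ηR : ℝ := min (c*(α₂-α₁)/(2*α₁)) (c*(α₂-α₁)/2/MR) with hηRdef
  have hηR0 : 0 < ηR := lt_min (div_pos hK (by linarith)) (div_pos (by linarith) hMR0)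
  have hηR1 : ηR ≤ c*(α₂-α₁)/(2*α₁) := min_le_left _ _
  have hηR2 : ηR ≤ c*(α₂-α₁)/2/MR := min_le_right _ _
  set R : ℝ := max (c + 2*c*(α₂-α₁)/α₁) (max 1 ((2*lam) ^ (2/α₁ : ℝ))) with hRdef
  have hR1' : c + 2*c*(α₂-α₁)/α₁ ≤ R := le_max_left _ _
  have hR2' : (2*lam) ^ (2/α₁ : ℝ) ≤ R := le_trans (le_max_right _ _) (le_max_right _ _)
  have hR1 : 1 ≤ R := le_trans (le_max_left _ _) (le_max_right _ _)
  have hRc : c < R := by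
    have htp : 0 < 2*c*(α₂-α₁)/α₁ := div_pos (by nlinarith) h0
    linarith only [hR1', htp]
  set Rm : ℝ := max R (c + ηR) with hRmdef
  have hRRm : R ≤ Rm := le_max_left _ _
  have hRmηR : c + ηR ≤ Rm := le_max_right _ _
  have hRmc : c < Rm := lt_of_lt_of_le hRc hRRm
  have hRm1 : 1 ≤ Rm := le_trans hR1 hRRm
  -- the six pieces are inside S = Ioi 0 \ {c}
  have hsub1 : Set.Ioc 0 δ ⊆ Set.Ioi 0 \ {c} := by
    intro x hx
    refine ⟨hx.1, fun e => ?_⟩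
    rw [Set.mem_singleton_iff] at e
    have h1 : x ≤ 1 := le_trans hx.2 hδ1
    rw [e] at h1
    linarith only [h1, hc1]
  have hsub2 : Set.Icc δ (c-ηL) ⊆ Set.Ioi 0 \ {c} :=
    mySubS hδ0 (by linarith only [hηL0])
  have hsub3 : Set.Ico (c-ηL) c ⊆ Set.Ioi 0 \ {c} := by
    intro x hx
    have hbx : 0 < x := by
      have h1 : (1:ℝ) ≤ c - ηL := by linarith only [hηL1, hc1]
      linarith only [h1, hx.1]
    refine ⟨Set.mem_Ioi.2 hbx, fun e => ?_⟩
    rw [Set.mem_singleton_iff] at e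
    rw [e] at hx
    exact absurd hx.2 (lt_irrefl _)
  have hsub4 : Set.Ioc c (c+ηR) ⊆ Set.Ioi 0 \ {c} := by
    intro x hx
    refine ⟨Set.mem_Ioi.2 (by linarith only [hx.1, hc]), fun e => ?_⟩
    rw [Set.mem_singleton_iff] at e
    rw [e] at hx
    exact absurd hx.1 (lt_irrefl _)
  have hsub5 : Set.Icc (c+ηR) Rm ⊆ Set.Ioi 0 \ {c} :=
    mySubS' (by linarith only [hηR0]) hc
  have hsub6 : Set.Ioi Rm ⊆ Set.Ioi 0 \ {c} := by
    intro x hx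
    rw [Set.mem_Ioi] at hx
    refine ⟨Set.mem_Ioi.2 (by linarith only [hx, hRm1]), fun e => ?_⟩
    rw [Set.mem_singleton_iff] at e
    rw [e] at hx
    linarith only [hx, hRmc]
  -- integrability on the six pieces
  have hI1 : IntegrableOn (myF α₁ α₂ c lam t) (Set.Ioc 0 δ) := by
    have hg : IntegrableOn (fun x : ℝ => (2/lam) * x ^ (α₂-1:ℝ)) (Set.Ioc 0 δ) := by
      have h := intervalIntegral.intervalIntegrable_rpow' (r := α₂-1) (a := 0) (b := δ)
        (by linarith only [hα2])
      rw [intervalIntegrable_iff_integrableOn_Ioc_of_le hδ0.le] at h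
      exact h.const_mul _
    exact Integrable.mono' hg ((hcont.mono hsub1).aestronglyMeasurable measurableSet_Ioc)
      ((ae_restrict_iff' measurableSet_Ioc).2
        (Filter.Eventually.of_forall (myBound1 h0 h12 hc1 hlam ht hδ1 hδ2)))
  have hI2 : IntegrableOn (myF α₁ α₂ c lam t) (Set.Icc δ (c-ηL)) :=
    (hcont.mono hsub2).integrableOn_compact isCompact_Icc
  have hI3 : IntegrableOn (myF α₁ α₂ c lam t) (Set.Ico (c-ηL) c) := by
    refine Integrable.mono' (g := fun _ : ℝ => (2:ℝ)) ?_
      ((hcont.mono hsub3).aestronglyMeasurable measurableSet_Ico)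
      ((ae_restrict_iff' measurableSet_Ico).2
        (Filter.Eventually.of_forall (myBound3 h0 h12 hc1 hlam ht hηL0 hML1 hML2 hηL2 hηL1)))
    exact integrableOn_const (by rw [Real.volume_Ico]; exact ENNReal.ofReal_ne_top)
  have hI4 : IntegrableOn (myF α₁ α₂ c lam t) (Set.Ioc c (c+ηR)) := by
    refine Integrable.mono' (g := fun _ : ℝ => (1:ℝ)) ?_
      ((hcont.mono hsub4).aestronglyMeasurable measurableSet_Ioc)
      ((ae_restrict_iff' measurableSet_Ioc).2
        (Filter.Eventually.of_forall (myBound4 h0 h12 hc1 hlam ht hηR0 hMR1 hMR2 hηR1 hηR2)))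
    exact integrableOn_const (by rw [Real.volume_Ioc]; exact ENNReal.ofReal_ne_top)
  have hI5 : IntegrableOn (myF α₁ α₂ c lam t) (Set.Icc (c+ηR) Rm) :=
    (hcont.mono hsub5).integrableOn_compact isCompact_Icc
  have hI6 : IntegrableOn (myF α₁ α₂ c lam t) (Set.Ioi Rm) := by
    refine Integrable.mono' ((exp_neg_integrableOn_Ioi Rm ht).const_mul 2)
      ((hcont.mono hsub6).aestronglyMeasurable measurableSet_Ioi)
      ((ae_restrict_iff' measurableSet_Ioi).2
        (Filter.Eventually.of_forall
          (myBound6 h0 h12 hc1 hlam ht (le_trans hR1' hRRm) (le_trans hR2' hRRm) hRm1)))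
  -- combine everything
  have hIS : IntegrableOn (myF α₁ α₂ c lam t) (Set.Ioi 0 \ {c}) :=
    (((hI1.union hI2).union hI3).union ((hI4.union hI5).union hI6)).mono_set myCover
  have hIc : IntegrableOn (myF α₁ α₂ c lam t) {c} := by
    unfold IntegrableOn
    rw [Measure.restrict_eq_zero.2 (by simp : (volume : Measure ℝ) {c} = 0)]
    exact integrable_zero_measure
  have hdecomp : Set.Ioi (0:ℝ) = (Set.Ioi 0 \ {c}) ∪ {c} := by
    ext x
    simp only [Set.mem_union, Set.mem_diff, Set.mem_singleton_iff, Set.mem_Ioi]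
    constructor
    · intro hx
      by_cases hxc : x = c
      · exact Or.inr hxc
      · exact Or.inl ⟨hx, hxc⟩
    · rintro (⟨hx, _⟩ | rfl)
      · exact hx
      · exact hc
  rw [hdecomp]
  exact hIS.union hIc
end

section
/- Assume in addition c > 1 and that 1 + 2λ ρ^{h(ρ)} cos(π h(ρ)) + λ² ρ^{2 h(ρ)} ≠ 0 for every ρ ∈ (0,∞) ∖ {c}. Then the real-valued function ρ ↦ λ ρ^{h(ρ)} sin(π h(ρ)) e^{−ρ t} / (ρ(1 + 2λ ρ^{h(ρ)} cos(π h(ρ)) + λ² ρ^{2 h(ρ)})) is Lebesgue integrable on (0,∞). -/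
open MeasureTheory Filter Set
open scoped Topology

namespace ScarpiAux

/-- The denominator of the integrand. -/
noncomputable def den (α₁ α₂ c lam : ℝ) (ρ : ℝ) : ℝ :=
  1 + 2 * lam * ρ ^ hfun α₁ α₂ c ρ * Real.cos (Real.pi * hfun α₁ α₂ c ρ) +
    lam ^ 2 * ρ ^ (2 * hfun α₁ α₂ c ρ)

/-- The full integrand. -/
noncomputable def F (α₁ α₂ c lam t : ℝ) (ρ : ℝ) : ℝ :=
  lam * ρ ^ hfun α₁ α₂ c ρ * Real.sin (Real.pi * hfun α₁ α₂ c ρ) * Real.exp (-ρ * t) /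
    (ρ * den α₁ α₂ c lam ρ)

lemma rpow_two_eq {ρ hv : ℝ} (hρ : 0 < ρ) : ρ ^ (2 * hv) = (ρ ^ hv) ^ 2 := by
  rw [two_mul, Real.rpow_add hρ, sq]

lemma hfun_le_left {α₁ α₂ c : ℝ} (hc : 0 < c) (h12 : α₁ ≤ α₂) {ρ : ℝ} (hρc : ρ < c) :
    hfun α₁ α₂ c ρ ≤ -α₁ := by
  rw [hfun, div_le_iff₀ (by linarith : (0:ℝ) < c - ρ)]
  nlinarith

lemma hfun_le_right {α₁ α₂ c : ℝ} (h0 : 0 < α₁) (hc : 0 < c) {ρ : ℝ}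
    (h1 : 2 * c ≤ ρ) (h2 : 2 * α₂ * c / α₁ ≤ ρ) : hfun α₁ α₂ c ρ ≤ -(α₁ / 2) := by
  have hcρ : c - ρ < 0 := by linarith
  have h2' : 2 * α₂ * c ≤ α₁ * ρ := by
    rw [div_le_iff₀ h0] at h2; nlinarith
  rw [hfun, div_le_iff_of_neg hcρ]
  nlinarith

lemma den_pos {α₁ α₂ c lam : ℝ} {ρ : ℝ} (hρ : 0 < ρ)
    (hden : den α₁ α₂ c lam ρ ≠ 0) : 0 < den α₁ α₂ c lam ρ := by
  refine lt_of_le_of_ne ?_ (Ne.symm hden)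
  have h2 : ρ ^ (2 * hfun α₁ α₂ c ρ) = (ρ ^ hfun α₁ α₂ c ρ) ^ 2 := rpow_two_eq hρ
  simp only [den, h2]
  have hsc : Real.sin (Real.pi * hfun α₁ α₂ c ρ) ^ 2 + Real.cos (Real.pi * hfun α₁ α₂ c ρ) ^ 2 = 1 :=
    Real.sin_sq_add_cos_sq _
  have key : lam ^ 2 * (ρ ^ hfun α₁ α₂ c ρ) ^ 2 *
      (Real.sin (Real.pi * hfun α₁ α₂ c ρ) ^ 2 + Real.cos (Real.pi * hfun α₁ α₂ c ρ) ^ 2)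
      = lam ^ 2 * (ρ ^ hfun α₁ α₂ c ρ) ^ 2 := by rw [hsc, mul_one]
  nlinarith [sq_nonneg (1 + lam * ρ ^ hfun α₁ α₂ c ρ * Real.cos (Real.pi * hfun α₁ α₂ c ρ)),
    sq_nonneg (lam * ρ ^ hfun α₁ α₂ c ρ * Real.sin (Real.pi * hfun α₁ α₂ c ρ)), key]

lemma den_lb_small {x co : ℝ} (h0 : 0 ≤ x) (h1 : x ≤ 1/2) (hco : -1 ≤ co) :
    1/4 ≤ 1 + 2 * x * co + x ^ 2 := by nlinarith [mul_nonneg h0 (by linarith : (0:ℝ) ≤ co + 1)]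

lemma den_lb_large {x co : ℝ} (h2 : 2 ≤ x) (hco : -1 ≤ co) :
    x ^ 2 ≤ 4 * (1 + 2 * x * co + x ^ 2) := by
  nlinarith [mul_nonneg (by linarith : (0:ℝ) ≤ x) (by linarith : (0:ℝ) ≤ co + 1),
    mul_nonneg (by linarith : (0:ℝ) ≤ 3 * x - 2) (by linarith : (0:ℝ) ≤ x - 2)]

lemma abs_num_le {α₁ α₂ c lam t : ℝ} (hlam : 0 < lam) {ρ : ℝ} (hρ : 0 < ρ) :
    |lam * ρ ^ hfun α₁ α₂ c ρ * Real.sin (Real.pi * hfun α₁ α₂ c ρ) * Real.exp (-ρ * t)|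
      ≤ lam * ρ ^ hfun α₁ α₂ c ρ * Real.exp (-ρ * t) := by
  have hP : 0 < ρ ^ hfun α₁ α₂ c ρ := Real.rpow_pos_of_pos hρ _
  have he : 0 < Real.exp (-ρ * t) := Real.exp_pos _
  have hsin : |Real.sin (Real.pi * hfun α₁ α₂ c ρ)| ≤ 1 :=
    abs_le.mpr ⟨Real.neg_one_le_sin _, Real.sin_le_one _⟩
  rw [abs_mul, abs_mul, abs_mul, abs_of_pos hlam, abs_of_pos hP, abs_of_pos he]
  nlinarith [mul_pos hlam hP, mul_pos (mul_pos hlam hP) he, abs_nonneg (Real.sin (Real.pi * hfun α₁ α₂ c ρ))]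

lemma abs_F_le_small {α₁ α₂ c lam t : ℝ} (hlam : 0 < lam) {ρ : ℝ} (hρ : 0 < ρ)
    (hden : den α₁ α₂ c lam ρ ≠ 0) (hx : lam * ρ ^ hfun α₁ α₂ c ρ ≤ 1/2) :
    |F α₁ α₂ c lam t ρ| ≤ 4 * lam * ρ ^ hfun α₁ α₂ c ρ * Real.exp (-ρ * t) / ρ := by
  have hP : 0 < ρ ^ hfun α₁ α₂ c ρ := Real.rpow_pos_of_pos hρ _
  have he : 0 < Real.exp (-ρ * t) := Real.exp_pos _
  have hD : 0 < den α₁ α₂ c lam ρ := den_pos hρ hden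
  have hD4 : 1/4 ≤ den α₁ α₂ c lam ρ := by
    have h2 : ρ ^ (2 * hfun α₁ α₂ c ρ) = (ρ ^ hfun α₁ α₂ c ρ) ^ 2 := rpow_two_eq hρ
    have := den_lb_small (x := lam * ρ ^ hfun α₁ α₂ c ρ)
      (co := Real.cos (Real.pi * hfun α₁ α₂ c ρ))
      (mul_pos hlam hP).le hx (Real.neg_one_le_cos _)
    simp only [den, h2]
    nlinarith
  rw [F, abs_div, abs_of_pos (mul_pos hρ hD)]
  calc |lam * ρ ^ hfun α₁ α₂ c ρ * Real.sin (Real.pi * hfun α₁ α₂ c ρ) * Real.exp (-ρ * t)|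
        / (ρ * den α₁ α₂ c lam ρ)
      ≤ (lam * ρ ^ hfun α₁ α₂ c ρ * Real.exp (-ρ * t)) / (ρ * den α₁ α₂ c lam ρ) := by
        gcongr
        exact abs_num_le hlam hρ
    _ ≤ (lam * ρ ^ hfun α₁ α₂ c ρ * Real.exp (-ρ * t)) / (ρ * (1/4)) := by
        gcongr
    _ = 4 * lam * ρ ^ hfun α₁ α₂ c ρ * Real.exp (-ρ * t) / ρ := by ring

lemma abs_F_le_large {α₁ α₂ c lam t : ℝ} (hlam : 0 < lam) {ρ : ℝ} (hρ : 0 < ρ)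
    (hden : den α₁ α₂ c lam ρ ≠ 0) (hx : 2 ≤ lam * ρ ^ hfun α₁ α₂ c ρ) :
    |F α₁ α₂ c lam t ρ| ≤ 4 * Real.exp (-ρ * t) / (ρ * (lam * ρ ^ hfun α₁ α₂ c ρ)) := by
  have hP : 0 < ρ ^ hfun α₁ α₂ c ρ := Real.rpow_pos_of_pos hρ _
  have he : 0 < Real.exp (-ρ * t) := Real.exp_pos _
  have hD : 0 < den α₁ α₂ c lam ρ := den_pos hρ hden
  have hD4 : (lam * ρ ^ hfun α₁ α₂ c ρ) ^ 2 ≤ 4 * den α₁ α₂ c lam ρ := by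
    have h2 : ρ ^ (2 * hfun α₁ α₂ c ρ) = (ρ ^ hfun α₁ α₂ c ρ) ^ 2 := rpow_two_eq hρ
    have := den_lb_large (x := lam * ρ ^ hfun α₁ α₂ c ρ)
      (co := Real.cos (Real.pi * hfun α₁ α₂ c ρ)) hx (Real.neg_one_le_cos _)
    simp only [den, h2]
    nlinarith
  rw [F, abs_div, abs_of_pos (mul_pos hρ hD)]
  calc |lam * ρ ^ hfun α₁ α₂ c ρ * Real.sin (Real.pi * hfun α₁ α₂ c ρ) * Real.exp (-ρ * t)|
        / (ρ * den α₁ α₂ c lam ρ)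
      ≤ (lam * ρ ^ hfun α₁ α₂ c ρ * Real.exp (-ρ * t)) / (ρ * den α₁ α₂ c lam ρ) := by
        gcongr
        exact abs_num_le hlam hρ
    _ ≤ 4 * Real.exp (-ρ * t) / (ρ * (lam * ρ ^ hfun α₁ α₂ c ρ)) := by
        rw [div_le_div_iff₀ (mul_pos hρ hD) (mul_pos hρ (mul_pos hlam hP))]
        nlinarith [mul_le_mul_of_nonneg_left hD4 (mul_pos he hρ).le]

lemma continuousAt_hfun {α₁ α₂ c : ℝ} {ρ : ℝ} (hρc : ρ ≠ c) :
    ContinuousAt (hfun α₁ α₂ c) ρ := by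
  have : ContinuousAt (fun ρ : ℝ => (α₁ * ρ - α₂ * c) / (c - ρ)) ρ :=
    ContinuousAt.div (by fun_prop) (by fun_prop) (sub_ne_zero.mpr (Ne.symm hρc))
  exact this

lemma continuousAt_F {α₁ α₂ c lam t : ℝ} {ρ : ℝ} (hρ : 0 < ρ) (hρc : ρ ≠ c)
    (hden : den α₁ α₂ c lam ρ ≠ 0) : ContinuousAt (F α₁ α₂ c lam t) ρ := by
  have hh : ContinuousAt (hfun α₁ α₂ c) ρ := continuousAt_hfun hρc
  have hP : ContinuousAt (fun ρ : ℝ => ρ ^ hfun α₁ α₂ c ρ) ρ :=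
    ContinuousAt.rpow continuousAt_id hh (Or.inl hρ.ne')
  have hP2 : ContinuousAt (fun ρ : ℝ => ρ ^ (2 * hfun α₁ α₂ c ρ)) ρ :=
    ContinuousAt.rpow continuousAt_id (continuousAt_const.mul hh) (Or.inl hρ.ne')
  have hsin : ContinuousAt (fun ρ : ℝ => Real.sin (Real.pi * hfun α₁ α₂ c ρ)) ρ :=
    Real.continuous_sin.continuousAt.comp (continuousAt_const.mul hh)
  have hcos : ContinuousAt (fun ρ : ℝ => Real.cos (Real.pi * hfun α₁ α₂ c ρ)) ρ :=
    Real.continuous_cos.continuousAt.comp (continuousAt_const.mul hh)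
  have hexp : ContinuousAt (fun ρ : ℝ => Real.exp (-ρ * t)) ρ := by fun_prop
  have hD : ContinuousAt (den α₁ α₂ c lam) ρ := by
    have : ContinuousAt (fun ρ : ℝ => 1 + 2 * lam * ρ ^ hfun α₁ α₂ c ρ *
        Real.cos (Real.pi * hfun α₁ α₂ c ρ) + lam ^ 2 * ρ ^ (2 * hfun α₁ α₂ c ρ)) ρ :=
      (continuousAt_const.add ((continuousAt_const.mul hP).mul hcos)).add
        (continuousAt_const.mul hP2)
    exact this
  exact ContinuousAt.div (((continuousAt_const.mul hP).mul hsin).mul hexp)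
    (continuousAt_id.mul hD) (mul_ne_zero hρ.ne' hden)

end ScarpiAux

set_option maxHeartbeats 2000000 in
/-- If `c > 1` and the denominator never vanishes on `(0,∞) ∖ {c}`, the real-valued integrand
`ρ ↦ λ ρ^{h(ρ)} sin(π h(ρ)) e^{-ρ t}/(ρ(1 + 2λ ρ^{h(ρ)} cos(π h(ρ)) + λ² ρ^{2h(ρ)}))`
of the explicit solution formula is Lebesgue integrable on `(0,∞)`. -/
theorem solution_integrand_integrable
    (α₁ α₂ c lam t : ℝ) (h0 : 0 < α₁) (h12 : α₁ < α₂) (h21 : α₂ < 1)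
    (hc : 0 < c) (hlam : 0 < lam) (ht : 0 < t) (hc1 : 1 < c)
    (hnz : ∀ ρ : ℝ, 0 < ρ → ρ ≠ c →
      1 + 2 * lam * ρ ^ hfun α₁ α₂ c ρ * Real.cos (Real.pi * hfun α₁ α₂ c ρ) +
        lam ^ 2 * ρ ^ (2 * hfun α₁ α₂ c ρ) ≠ 0) :
    IntegrableOn (fun ρ : ℝ =>
        lam * ρ ^ hfun α₁ α₂ c ρ * Real.sin (Real.pi * hfun α₁ α₂ c ρ) * Real.exp (-ρ * t) /
          (ρ * (1 + 2 * lam * ρ ^ hfun α₁ α₂ c ρ * Real.cos (Real.pi * hfun α₁ α₂ c ρ) +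
            lam ^ 2 * ρ ^ (2 * hfun α₁ α₂ c ρ))))
      (Set.Ioi 0) := by
  have hlam2 : (0:ℝ) < lam / 2 := by linarith
  -- lower cutoff
  set r : ℝ := min 1 ((lam / 2) ^ (α₁⁻¹ : ℝ)) with hrdef
  have hr0 : 0 < r := lt_min one_pos (Real.rpow_pos_of_pos hlam2 _)
  have hr1 : r ≤ 1 := min_le_left _ _
  -- upper cutoff
  set R : ℝ := max (max (2 * c) (2 * α₂ * c / α₁)) (max 1 ((2 * lam) ^ (2 / α₁ : ℝ))) with hRdef
  have hR1 : (1:ℝ) ≤ R := le_max_of_le_right (le_max_left _ _)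
  have hRc : c < R := lt_of_lt_of_le (by linarith) (le_max_of_le_left (le_max_left _ _))
  have hrc : r < c := lt_of_le_of_lt hr1 hc1
  have hrR : r ≤ R := hr1.trans hR1
  -- facts on the small region
  have hsmall : ∀ ρ : ℝ, 0 < ρ → ρ ≤ r →
      2 ≤ lam * ρ ^ hfun α₁ α₂ c ρ ∧ ρ ^ (-(hfun α₁ α₂ c ρ)) ≤ ρ ^ α₁ := by
    intro ρ hρ hρr
    have hρ1 : ρ ≤ 1 := hρr.trans hr1
    have hρc : ρ < c := lt_of_le_of_lt hρ1 hc1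
    have hle : hfun α₁ α₂ c ρ ≤ -α₁ := ScarpiAux.hfun_le_left hc h12.le hρc
    have hmono : ρ ^ (-α₁) ≤ ρ ^ hfun α₁ α₂ c ρ :=
      Real.rpow_le_rpow_of_exponent_ge hρ hρ1 hle
    have hmono2 : ρ ^ (-(hfun α₁ α₂ c ρ)) ≤ ρ ^ α₁ :=
      Real.rpow_le_rpow_of_exponent_ge hρ hρ1 (by linarith)
    constructor
    · have hρle : ρ ≤ (lam / 2) ^ (α₁⁻¹ : ℝ) := hρr.trans (min_le_right _ _)
      have h1 : ρ ^ α₁ ≤ ((lam / 2) ^ (α₁⁻¹ : ℝ)) ^ α₁ := Real.rpow_le_rpow hρ.le hρle h0.le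
      rw [Real.rpow_inv_rpow hlam2.le h0.ne'] at h1
      have hαpos : 0 < ρ ^ α₁ := Real.rpow_pos_of_pos hρ _
      have h2 : 2 ≤ lam * ρ ^ (-α₁) := by
        rw [Real.rpow_neg hρ.le, ← sub_nonneg]
        have : lam * (ρ ^ α₁)⁻¹ - 2 = (lam - 2 * ρ ^ α₁) / ρ ^ α₁ := by
          field_simp
        rw [this]
        apply div_nonneg (by linarith) hαpos.le
      calc (2:ℝ) ≤ lam * ρ ^ (-α₁) := h2
        _ ≤ lam * ρ ^ hfun α₁ α₂ c ρ := by nlinarith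
    · exact hmono2
  -- facts on the large region
  have hlarge : ∀ ρ : ℝ, R < ρ → lam * ρ ^ hfun α₁ α₂ c ρ ≤ 1 / 2 := by
    intro ρ hρR
    have hρ1 : (1:ℝ) ≤ ρ := hR1.trans hρR.le
    have hρ0 : (0:ℝ) < ρ := by linarith
    have h2c : 2 * c ≤ ρ := ((le_max_left _ _).trans (le_max_left _ _)).trans hρR.le
    have h2a : 2 * α₂ * c / α₁ ≤ ρ := ((le_max_right _ _).trans (le_max_left _ _)).trans hρR.le
    have hle : hfun α₁ α₂ c ρ ≤ -(α₁ / 2) := ScarpiAux.hfun_le_right h0 hc h2c h2a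
    have hmono : ρ ^ hfun α₁ α₂ c ρ ≤ ρ ^ (-(α₁ / 2)) :=
      Real.rpow_le_rpow_of_exponent_le hρ1 hle
    have hρlam : (2 * lam) ^ (2 / α₁ : ℝ) ≤ ρ := ((le_max_right _ _).trans (le_max_right _ _)).trans hρR.le
    have h2lam : 2 * lam ≤ ρ ^ (α₁ / 2 : ℝ) := by
      have h1 : ((2 * lam) ^ (2 / α₁ : ℝ)) ^ (α₁ / 2 : ℝ) ≤ ρ ^ (α₁ / 2 : ℝ) :=
        Real.rpow_le_rpow (by positivity) hρlam (by positivity)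
      rwa [← Real.rpow_mul (by linarith), show (2 / α₁ : ℝ) * (α₁ / 2) = 1 by field_simp,
        Real.rpow_one] at h1
    have hαpos : 0 < ρ ^ (α₁ / 2 : ℝ) := Real.rpow_pos_of_pos hρ0 _
    have key : lam * ρ ^ (-(α₁ / 2) : ℝ) ≤ 1 / 2 := by
      rw [Real.rpow_neg hρ0.le, ← sub_nonneg]
      have : 1 / 2 - lam * (ρ ^ (α₁ / 2 : ℝ))⁻¹ = (ρ ^ (α₁ / 2 : ℝ) - 2 * lam) / (2 * ρ ^ (α₁ / 2 : ℝ)) := by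
        field_simp
      rw [this]
      apply div_nonneg (by linarith) (by linarith)
    calc lam * ρ ^ hfun α₁ α₂ c ρ ≤ lam * ρ ^ (-(α₁ / 2) : ℝ) := by nlinarith
      _ ≤ 1 / 2 := key
  -- piece 1 : (0, r]
  have int1 : IntegrableOn (ScarpiAux.F α₁ α₂ c lam t) (Set.Ioc 0 r) := by
    have hg : IntegrableOn (fun ρ : ℝ => (4 / lam) * ρ ^ (α₁ - 1)) (Set.Ioc 0 r) := by
      have := (intervalIntegral.intervalIntegrable_rpow' (show (-1:ℝ) < α₁ - 1 by linarith)
        (a := 0) (b := r))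
      rw [intervalIntegrable_iff, uIoc_of_le hr0.le] at this
      exact this.const_mul _
    have hmeas : AEStronglyMeasurable (ScarpiAux.F α₁ α₂ c lam t) (volume.restrict (Set.Ioc 0 r)) := by
      apply ContinuousOn.aestronglyMeasurable _ measurableSet_Ioc
      intro ρ hρ
      have hρ0 : 0 < ρ := hρ.1
      have hρc : ρ ≠ c := ne_of_lt (lt_of_le_of_lt (hρ.2.trans hr1) hc1)
      exact (ScarpiAux.continuousAt_F hρ0 hρc (hnz ρ hρ0 hρc)).continuousWithinAt
    apply Integrable.mono' hg hmeas
    rw [ae_restrict_iff' measurableSet_Ioc]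
    refine Eventually.of_forall fun ρ hρ => ?_
    have hρ0 : 0 < ρ := hρ.1
    have hρc : ρ ≠ c := ne_of_lt (lt_of_le_of_lt (hρ.2.trans hr1) hc1)
    obtain ⟨hx2, hxm⟩ := hsmall ρ hρ0 hρ.2
    have hP : 0 < ρ ^ hfun α₁ α₂ c ρ := Real.rpow_pos_of_pos hρ0 _
    have he1 : Real.exp (-ρ * t) ≤ 1 := Real.exp_le_one_iff.mpr (by nlinarith)
    have h1 : |ScarpiAux.F α₁ α₂ c lam t ρ| ≤ 4 * Real.exp (-ρ * t) / (ρ * (lam * ρ ^ hfun α₁ α₂ c ρ)) :=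
      ScarpiAux.abs_F_le_large hlam hρ0 (hnz ρ hρ0 hρc) hx2
    have h2 : 4 * Real.exp (-ρ * t) / (ρ * (lam * ρ ^ hfun α₁ α₂ c ρ))
        ≤ (4 / lam) * ρ ^ (α₁ - 1) := by
      have heq : (4 / lam) * (ρ ^ (-(hfun α₁ α₂ c ρ)) / ρ) = 4 / (ρ * (lam * ρ ^ hfun α₁ α₂ c ρ)) := by
        rw [Real.rpow_neg hρ0.le]
        field_simp
      have heq2 : (4 / lam) * ρ ^ (α₁ - 1) = (4 / lam) * (ρ ^ α₁ / ρ) := by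
        rw [Real.rpow_sub hρ0, Real.rpow_one]
      rw [heq2]
      calc 4 * Real.exp (-ρ * t) / (ρ * (lam * ρ ^ hfun α₁ α₂ c ρ))
          ≤ 4 * 1 / (ρ * (lam * ρ ^ hfun α₁ α₂ c ρ)) := by
            gcongr
        _ = (4 / lam) * (ρ ^ (-(hfun α₁ α₂ c ρ)) / ρ) := by rw [mul_one, heq]
        _ ≤ (4 / lam) * (ρ ^ α₁ / ρ) := by gcongr
    calc ‖ScarpiAux.F α₁ α₂ c lam t ρ‖ = |ScarpiAux.F α₁ α₂ c lam t ρ| := rfl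
      _ ≤ (4 / lam) * ρ ^ (α₁ - 1) := h1.trans h2
  -- piece 3 : (R, ∞)
  have int3 : IntegrableOn (ScarpiAux.F α₁ α₂ c lam t) (Set.Ioi R) := by
    have hg : IntegrableOn (fun ρ : ℝ => 2 * Real.exp (-t * ρ)) (Set.Ioi R) :=
      (exp_neg_integrableOn_Ioi R ht).const_mul 2
    have hmeas : AEStronglyMeasurable (ScarpiAux.F α₁ α₂ c lam t) (volume.restrict (Set.Ioi R)) := by
      apply ContinuousOn.aestronglyMeasurable _ measurableSet_Ioi
      intro ρ hρ
      have hρR : R < ρ := hρ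
      have hρ0 : 0 < ρ := lt_of_lt_of_le (by linarith) hρR.le
      have hρc : ρ ≠ c := ne_of_gt (hRc.trans hρR)
      exact (ScarpiAux.continuousAt_F hρ0 hρc (hnz ρ hρ0 hρc)).continuousWithinAt
    apply Integrable.mono' hg hmeas
    rw [ae_restrict_iff' measurableSet_Ioi]
    refine Eventually.of_forall fun ρ hρ => ?_
    have hρR : R < ρ := hρ
    have hρ1 : (1:ℝ) ≤ ρ := hR1.trans hρR.le
    have hρ0 : 0 < ρ := by linarith
    have hρc : ρ ≠ c := ne_of_gt (hRc.trans hρR)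
    have hx := hlarge ρ hρR
    have hP : 0 < ρ ^ hfun α₁ α₂ c ρ := Real.rpow_pos_of_pos hρ0 _
    have he : 0 < Real.exp (-ρ * t) := Real.exp_pos _
    have h1 : |ScarpiAux.F α₁ α₂ c lam t ρ| ≤ 4 * lam * ρ ^ hfun α₁ α₂ c ρ * Real.exp (-ρ * t) / ρ :=
      ScarpiAux.abs_F_le_small hlam hρ0 (hnz ρ hρ0 hρc) hx
    have h2 : 4 * lam * ρ ^ hfun α₁ α₂ c ρ * Real.exp (-ρ * t) / ρ ≤ 2 * Real.exp (-t * ρ) := by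
      rw [show (-t * ρ) = (-ρ * t) by ring, div_le_iff₀ hρ0]
      nlinarith [mul_pos hlam hP]
    calc ‖ScarpiAux.F α₁ α₂ c lam t ρ‖ = |ScarpiAux.F α₁ α₂ c lam t ρ| := rfl
      _ ≤ 2 * Real.exp (-t * ρ) := h1.trans h2
  -- limits at c
  have hnumlim : Tendsto (fun ρ : ℝ => α₁ * ρ - α₂ * c) (𝓝 c) (𝓝 (α₁ * c - α₂ * c)) := by
    exact ((continuous_const.mul continuous_id).sub continuous_const).tendsto c
  have hnumneg : α₁ * c - α₂ * c < 0 := by nlinarith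
  have hloglim : Tendsto (fun ρ : ℝ => Real.log ρ) (𝓝 c) (𝓝 (Real.log c)) :=
    (Real.continuousAt_log (ne_of_gt hc))
  have hlogpos : 0 < Real.log c := Real.log_pos hc1
  have hposev : ∀ᶠ ρ : ℝ in 𝓝 c, 0 < ρ := eventually_gt_nhds hc
  -- left limit : lam * ρ ^ h ρ → 0
  have hPleft : Tendsto (fun ρ : ℝ => lam * ρ ^ hfun α₁ α₂ c ρ) (𝓝[<] c) (𝓝 0) := by
    have hinv : Tendsto (fun ρ : ℝ => (c - ρ)⁻¹) (𝓝[<] c) atTop := by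
      apply tendsto_inv_nhdsGT_zero.comp
      rw [tendsto_nhdsWithin_iff]
      constructor
      · have : Tendsto (fun ρ : ℝ => c - ρ) (𝓝 c) (𝓝 (c - c)) :=
          (continuous_const.sub continuous_id).tendsto c
        simpa using this.mono_left nhdsWithin_le_nhds
      · filter_upwards [self_mem_nhdsWithin] with ρ (hρ : ρ < c)
        exact sub_pos.mpr hρ
    have hhlim : Tendsto (hfun α₁ α₂ c) (𝓝[<] c) atBot := by
      have := Tendsto.neg_mul_atTop hnumneg (hnumlim.mono_left nhdsWithin_le_nhds) hinv
      refine this.congr fun ρ => ?_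
      rw [hfun, div_eq_mul_inv]
    have hmull : Tendsto (fun ρ : ℝ => Real.log ρ * hfun α₁ α₂ c ρ) (𝓝[<] c) atBot :=
      Tendsto.pos_mul_atBot hlogpos (hloglim.mono_left nhdsWithin_le_nhds) hhlim
    have hexplim : Tendsto (fun ρ : ℝ => Real.exp (Real.log ρ * hfun α₁ α₂ c ρ)) (𝓝[<] c) (𝓝 0) :=
      Real.tendsto_exp_atBot.comp hmull
    have heq : ∀ᶠ ρ : ℝ in 𝓝[<] c, Real.exp (Real.log ρ * hfun α₁ α₂ c ρ) = ρ ^ hfun α₁ α₂ c ρ := by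
      filter_upwards [hposev.filter_mono nhdsWithin_le_nhds] with ρ hρ
      rw [Real.rpow_def_of_pos hρ]
    have : Tendsto (fun ρ : ℝ => ρ ^ hfun α₁ α₂ c ρ) (𝓝[<] c) (𝓝 0) :=
      hexplim.congr' heq
    simpa using this.const_mul lam
  -- right limit : lam * ρ ^ h ρ → ∞
  have hPright : Tendsto (fun ρ : ℝ => lam * ρ ^ hfun α₁ α₂ c ρ) (𝓝[>] c) atTop := by
    have hinv : Tendsto (fun ρ : ℝ => (c - ρ)⁻¹) (𝓝[>] c) atBot := by
      have h1 : Tendsto (fun ρ : ℝ => (ρ - c)⁻¹) (𝓝[>] c) atTop := by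
        apply tendsto_inv_nhdsGT_zero.comp
        rw [tendsto_nhdsWithin_iff]
        constructor
        · have : Tendsto (fun ρ : ℝ => ρ - c) (𝓝 c) (𝓝 (c - c)) :=
            (continuous_id.sub continuous_const).tendsto c
          simpa using this.mono_left nhdsWithin_le_nhds
        · filter_upwards [self_mem_nhdsWithin] with ρ (hρ : c < ρ)
          exact sub_pos.mpr hρ
      have := tendsto_neg_atTop_atBot.comp h1
      refine this.congr fun ρ => ?_
      simp [neg_inv, neg_sub]
    have hhlim : Tendsto (hfun α₁ α₂ c) (𝓝[>] c) atTop := by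
      have := Tendsto.neg_mul_atBot hnumneg (hnumlim.mono_left nhdsWithin_le_nhds) hinv
      refine this.congr fun ρ => ?_
      rw [hfun, div_eq_mul_inv]
    have hmull : Tendsto (fun ρ : ℝ => Real.log ρ * hfun α₁ α₂ c ρ) (𝓝[>] c) atTop :=
      Tendsto.pos_mul_atTop hlogpos (hloglim.mono_left nhdsWithin_le_nhds) hhlim
    have hexplim : Tendsto (fun ρ : ℝ => Real.exp (Real.log ρ * hfun α₁ α₂ c ρ)) (𝓝[>] c) atTop :=
      Real.tendsto_exp_atTop.comp hmull
    have heq : ∀ᶠ ρ : ℝ in 𝓝[>] c, Real.exp (Real.log ρ * hfun α₁ α₂ c ρ) = ρ ^ hfun α₁ α₂ c ρ := by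
      filter_upwards [hposev.filter_mono nhdsWithin_le_nhds] with ρ hρ
      rw [Real.rpow_def_of_pos hρ]
    exact Tendsto.const_mul_atTop hlam (hexplim.congr' heq)
  -- F tends to 0 at c from both sides
  have hFleft : Tendsto (ScarpiAux.F α₁ α₂ c lam t) (𝓝[<] c) (𝓝 0) := by
    rw [tendsto_zero_iff_abs_tendsto_zero]
    apply squeeze_zero' (Eventually.of_forall fun ρ => abs_nonneg _)
      (g := fun ρ : ℝ => 4 * (lam * ρ ^ hfun α₁ α₂ c ρ))
    · filter_upwards [self_mem_nhdsWithin,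
        (hposev.and (eventually_gt_nhds hc1)).filter_mono nhdsWithin_le_nhds,
        hPleft.eventually_lt_const (show (0:ℝ) < 1/2 by norm_num)] with ρ hρlt hρ01 hxlt
      have hρ0 : 0 < ρ := hρ01.1
      have hρ1 : 1 < ρ := hρ01.2
      have hρc : ρ ≠ c := ne_of_lt hρlt
      have hP : 0 < ρ ^ hfun α₁ α₂ c ρ := Real.rpow_pos_of_pos hρ0 _
      have he1 : Real.exp (-ρ * t) ≤ 1 := Real.exp_le_one_iff.mpr (by nlinarith)
      have he : 0 < Real.exp (-ρ * t) := Real.exp_pos _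
      have h1 := ScarpiAux.abs_F_le_small (t := t) hlam hρ0 (hnz ρ hρ0 hρc) hxlt.le
      have h2 : 4 * lam * ρ ^ hfun α₁ α₂ c ρ * Real.exp (-ρ * t) / ρ
          ≤ 4 * (lam * ρ ^ hfun α₁ α₂ c ρ) := by
        rw [div_le_iff₀ hρ0]
        nlinarith [mul_pos hlam hP]
      exact h1.trans h2
    · simpa using hPleft.const_mul (4:ℝ)
  have hFright : Tendsto (ScarpiAux.F α₁ α₂ c lam t) (𝓝[>] c) (𝓝 0) := by
    rw [tendsto_zero_iff_abs_tendsto_zero]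
    apply squeeze_zero' (Eventually.of_forall fun ρ => abs_nonneg _)
      (g := fun ρ : ℝ => 4 * (lam * ρ ^ hfun α₁ α₂ c ρ)⁻¹)
    · filter_upwards [self_mem_nhdsWithin,
        (hposev.and (eventually_gt_nhds hc1)).filter_mono nhdsWithin_le_nhds,
        hPright.eventually_ge_atTop 2] with ρ hρgt hρ01 hxge
      have hρ0 : 0 < ρ := hρ01.1
      have hρ1 : 1 < ρ := hρ01.2
      have hρc : ρ ≠ c := ne_of_gt hρgt
      have hP : 0 < ρ ^ hfun α₁ α₂ c ρ := Real.rpow_pos_of_pos hρ0 _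
      have hx0 : 0 < lam * ρ ^ hfun α₁ α₂ c ρ := mul_pos hlam hP
      have he1 : Real.exp (-ρ * t) ≤ 1 := Real.exp_le_one_iff.mpr (by nlinarith)
      have he : 0 < Real.exp (-ρ * t) := Real.exp_pos _
      have h1 := ScarpiAux.abs_F_le_large (t := t) hlam hρ0 (hnz ρ hρ0 hρc) hxge
      have h2 : 4 * Real.exp (-ρ * t) / (ρ * (lam * ρ ^ hfun α₁ α₂ c ρ))
          ≤ 4 * (lam * ρ ^ hfun α₁ α₂ c ρ)⁻¹ := by
        rw [div_le_iff₀ (mul_pos hρ0 hx0)]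
        have : 4 * (lam * ρ ^ hfun α₁ α₂ c ρ)⁻¹ * (ρ * (lam * ρ ^ hfun α₁ α₂ c ρ))
            = 4 * ρ := by field_simp
        rw [this]
        nlinarith
      exact h1.trans h2
    · have : Tendsto (fun ρ : ℝ => (lam * ρ ^ hfun α₁ α₂ c ρ)⁻¹) (𝓝[>] c) (𝓝 0) :=
        hPright.inv_tendsto_atTop
      simpa using this.const_mul (4:ℝ)
  have hFc : Tendsto (ScarpiAux.F α₁ α₂ c lam t) (𝓝[≠] c) (𝓝 0) := by
    rw [← nhdsLT_sup_nhdsGT]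
    exact Tendsto.sup hFleft hFright
  -- piece 2 : [r, R]
  have int2 : IntegrableOn (ScarpiAux.F α₁ α₂ c lam t) (Set.Ioc r R) := by
    set F' : ℝ → ℝ := fun ρ => if ρ = c then 0 else ScarpiAux.F α₁ α₂ c lam t ρ with hF'def
    have hF'cont : ContinuousOn F' (Set.Icc r R) := by
      intro ρ hρmem
      by_cases hρc : ρ = c
      · subst hρc
        apply ContinuousAt.continuousWithinAt
        have h0' : F' ρ = 0 := if_pos rfl
        unfold ContinuousAt
        rw [h0', ← nhdsNE_sup_pure]
        apply Tendsto.sup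
        · refine hFc.congr' ?_
          filter_upwards [self_mem_nhdsWithin] with x hx
          exact (if_neg hx).symm
        · have := tendsto_pure_nhds F' ρ
          rwa [h0'] at this
      · have hρ0 : 0 < ρ := lt_of_lt_of_le hr0 hρmem.1
        have hcf : ContinuousAt (ScarpiAux.F α₁ α₂ c lam t) ρ :=
          ScarpiAux.continuousAt_F hρ0 hρc (hnz ρ hρ0 hρc)
        have heq : F' =ᶠ[𝓝 ρ] ScarpiAux.F α₁ α₂ c lam t := by
          filter_upwards [isOpen_compl_singleton.mem_nhds (by simpa using hρc :
            ρ ∈ ({c} : Set ℝ)ᶜ)] with x hx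
          exact if_neg hx
        exact (hcf.congr_of_eventuallyEq heq).continuousWithinAt
    have hF'int : IntegrableOn F' (Set.Icc r R) := hF'cont.integrableOn_Icc
    have hae : F' =ᵐ[volume.restrict (Set.Icc r R)] ScarpiAux.F α₁ α₂ c lam t := by
      apply ae_restrict_of_ae
      have h1 : ∀ᵐ ρ : ℝ, ρ ≠ c := by
        rw [ae_iff]
        simp only [ne_eq, not_not, setOf_eq_eq_singleton]
        exact measure_singleton c
      filter_upwards [h1] with ρ hρ
      exact if_neg hρ
    exact (hF'int.congr_fun_ae hae).mono_set Set.Ioc_subset_Icc_self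
  -- combine
  have hsub : Set.Ioi (0:ℝ) ⊆ Set.Ioc 0 r ∪ (Set.Ioc r R ∪ Set.Ioi R) := by
    intro x hx
    rcases le_or_gt x r with hxr | hxr
    · exact Or.inl ⟨hx, hxr⟩
    · rcases le_or_gt x R with hxR | hxR
      · exact Or.inr (Or.inl ⟨hxr, hxR⟩)
      · exact Or.inr (Or.inr hxR)
  exact ((int1.union (int2.union int3)).mono_set hsub)
end
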